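/- arXiv:math/0611055 — 4 statements merged into one kernel-verified Lean document; each statement's English description precedes it below -/
import Mathlib

section
/- Let (W, I) be a Coxeter group, let J, K ⊆ I, and let w be a minimal length element of the coset W_K w (i.e., w ∈ ᴷW) with w⁻¹ K w ⊆ J (meaning w⁻¹ s_k w ∈ W_J and is a simple reflection in J for each k ∈ K). Write w = x y with x ∈ ᴷW^J (minimal in both W_K\W and W/W_J) and y ∈ W_J. Then x⁻¹ K x ⊆ J, i.e., x⁻¹ s_k x is a simple reflection in J for each k ∈ K. -/
set_option linter.unusedSectionVars false

open CoxeterSystem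

namespace CoxAux

variable {B W : Type*} [Group W] {M : CoxeterMatrix B} (cs : CoxeterSystem M W)

local prefix:100 "σ" => cs.simple
local prefix:100 "π" => cs.wordProd
local prefix:100 "ℓ" => cs.length

/-- The two-element group of values. -/
abbrev Z2 := Multiplicative (ZMod 2)

lemma Z2.sq (z : Z2) : z * z = 1 := by revert z; decide

lemma Z2.eq_one {z : Z2} (h : z ≠ Multiplicative.ofAdd 1) : z = 1 := by revert z h; decide

lemma Z2.one_ne : (Multiplicative.ofAdd (1 : ZMod 2)) ≠ (1 : Z2) := by decide

open scoped Classical in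
/-- Indicator function. -/
noncomputable def delta (t₀ : W) : W → Z2 :=
  fun t => if t = t₀ then Multiplicative.ofAdd 1 else 1

@[simp] lemma delta_self (t₀ : W) : delta t₀ t₀ = Multiplicative.ofAdd 1 := by
  simp [delta]

lemma delta_of_ne {t₀ t : W} (h : t ≠ t₀) : delta t₀ t = 1 := by
  simp [delta, h]

lemma delta_mul_self (t₀ : W) : delta t₀ * delta t₀ = 1 := by
  funext t
  exact Z2.sq _

/-- Conjugation action of `W` on functions `W → Z2`. -/
def kappa : W →* MulAut (W → Z2) where
  toFun u :=
    { toFun := fun f t => f (u⁻¹ * t * u)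
      invFun := fun f t => f (u * t * u⁻¹)
      left_inv := fun f => by funext t; group
      right_inv := fun f => by funext t; group
      map_mul' := fun f g => rfl }
  map_one' := by ext f t; simp
  map_mul' u v := by ext f t; simp [mul_assoc]

lemma kappa_apply (u : W) (f : W → Z2) (t : W) : kappa u f t = f (u⁻¹ * t * u) := rfl

lemma kappa_delta (u t₀ : W) : kappa u (delta t₀) = delta (u * t₀ * u⁻¹) := by
  funext t
  show delta t₀ (u⁻¹ * t * u) = delta (u * t₀ * u⁻¹) t
  have hiff : u⁻¹ * t * u = t₀ ↔ t = u * t₀ * u⁻¹ := by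
    constructor
    · rintro rfl; group
    · rintro rfl; group
  unfold delta
  by_cases hcond : t = u * t₀ * u⁻¹
  · rw [if_pos (hiff.mpr hcond), if_pos hcond]
  · rw [if_neg (fun hh => hcond (hiff.mp hh)), if_neg hcond]

/-- Power of an element of a semidirect product with commutative kernel. -/
lemma sdp_pow {N G : Type*} [CommGroup N] [Group G] (φ : G →* MulAut N)
    (a : N) (g : G) (m : ℕ) :
    (⟨a, g⟩ : N ⋊[φ] G) ^ m = ⟨∏ l ∈ Finset.range m, φ (g ^ l) a, g ^ m⟩ := by
  induction m with
  | zero => simp only [pow_zero, Finset.range_zero, Finset.prod_empty]; rfl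
  | succ m ih =>
    rw [pow_succ, ih, SemidirectProduct.mul_def]
    congr 1
    · rw [Finset.prod_range_succ]
    · rw [pow_succ]

lemma prod_range_pair {N : Type*} [CommMonoid N] (g : ℕ → N) (m : ℕ) :
    ∏ l ∈ Finset.range m, (g (2 * l) * g (2 * l + 1)) = ∏ r ∈ Finset.range (2 * m), g r := by
  induction m with
  | zero => simp
  | succ m ih =>
    rw [Finset.prod_range_succ, ih, Nat.mul_succ, Finset.prod_range_succ,
      Finset.prod_range_succ, mul_assoc]

lemma liftable_aux :
    M.IsLiftable (fun i => (⟨delta (cs.simple i), cs.simple i⟩ : (W → Z2) ⋊[kappa] W)) := by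
  intro i i'
  set m := M i i' with hm
  set p := σ i * σ i' with hp
  have hii : σ i * σ i = 1 := by rw [← pow_two]; exact cs.simple_sq i
  have hii' : σ i' * σ i' = 1 := by rw [← pow_two]; exact cs.simple_sq i'
  have hpm : p ^ m = 1 := cs.simple_mul_simple_pow i i'
  have hsi : σ i = p * σ i' := by
    rw [hp, mul_assoc, hii', mul_one]
  have hpinv : σ i' * p⁻¹ * (σ i')⁻¹ = p := by
    rw [hp, mul_inv_rev]
    simp only [cs.inv_simple]
    calc σ i' * (σ i' * σ i) * σ i' = (σ i' * σ i') * (σ i * σ i') := by group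
      _ = σ i * σ i' := by rw [hii', one_mul]
  have hconj : ∀ l : ℕ, σ i' * (p⁻¹) ^ l * (σ i')⁻¹ = p ^ l := by
    intro l
    have h := conj_pow (i := l) (a := σ i') (b := p⁻¹)
    rw [hpinv] at h
    exact h.symm
  have hcomm : ∀ l : ℕ, σ i' * (p⁻¹) ^ l = p ^ l * σ i' := by
    intro l
    have h := hconj l
    rw [cs.inv_simple] at h
    calc σ i' * (p⁻¹) ^ l = (σ i' * (p⁻¹) ^ l * σ i') * σ i' := by
          rw [mul_assoc _ (σ i') (σ i'), hii', mul_one]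
      _ = p ^ l * σ i' := by rw [h]
  have g1 : σ i = p ^ 1 * σ i' := by rw [pow_one]; exact hsi
  have g2 : σ i * σ i' * (σ i)⁻¹ = p ^ 2 * σ i' := by
    rw [cs.inv_simple, hsi]
    calc p * σ i' * σ i' * (p * σ i') = p * (σ i' * σ i') * p * σ i' := by group
      _ = p * p * σ i' := by rw [hii', mul_one]
      _ = p ^ 2 * σ i' := by rw [pow_two]
  have base : delta (σ i) * kappa (σ i) (delta (σ i')) =
      delta ((p ^ 1 * σ i' : W)) * delta ((p ^ 2 * σ i' : W)) := by
    rw [kappa_delta, g2]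
    nth_rewrite 1 [g1]
    rfl
  have key : ∀ l r : ℕ, p ^ l * (p ^ r * σ i') * (p ^ l)⁻¹ = p ^ (2 * l + r) * σ i' := by
    intro l r
    rw [← inv_pow]
    calc p ^ l * (p ^ r * σ i') * (p⁻¹) ^ l
        = p ^ l * p ^ r * (σ i' * (p⁻¹) ^ l) := by group
      _ = p ^ l * p ^ r * (p ^ l * σ i') := by rw [hcomm l]
      _ = (p ^ l * p ^ r * p ^ l) * σ i' := by group
      _ = p ^ (2 * l + r) * σ i' := by
          rw [← pow_add, ← pow_add, show l + r + l = 2 * l + r from by omega]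
  have hterm : ∀ l : ℕ, kappa (p ^ l) (delta (σ i) * kappa (σ i) (delta (σ i'))) =
      delta ((p ^ (2 * l + 1) * σ i' : W)) * delta ((p ^ (2 * l + 2) * σ i' : W)) := by
    intro l
    rw [base, map_mul, kappa_delta, kappa_delta, key l 1, key l 2]
  have hper : ∀ r : ℕ, delta ((p ^ (m + r) * σ i' : W)) = delta ((p ^ r * σ i' : W)) := by
    intro r
    rw [Nat.add_comm m r, pow_add, hpm, mul_one]
  have hL : (∏ l ∈ Finset.range m, kappa (p ^ l)
      (delta (σ i) * kappa (σ i) (delta (σ i')))) = 1 := by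
    calc ∏ l ∈ Finset.range m, kappa (p ^ l) (delta (σ i) * kappa (σ i) (delta (σ i')))
        = ∏ l ∈ Finset.range m,
            (delta ((p ^ (2 * l + 1) * σ i' : W)) * delta ((p ^ (2 * l + 2) * σ i' : W))) :=
          Finset.prod_congr rfl (fun l _ => hterm l)
      _ = ∏ l ∈ Finset.range m,
            ((fun r => delta ((p ^ (r + 1) * σ i' : W))) (2 * l) *
             (fun r => delta ((p ^ (r + 1) * σ i' : W))) (2 * l + 1)) :=
          Finset.prod_congr rfl (fun l _ => rfl)
      _ = ∏ r ∈ Finset.range (2 * m), delta ((p ^ (r + 1) * σ i' : W)) :=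
          prod_range_pair (fun r => delta ((p ^ (r + 1) * σ i' : W))) m
      _ = (∏ r ∈ Finset.range m, delta ((p ^ (r + 1) * σ i' : W))) *
            ∏ r ∈ Finset.range m, delta ((p ^ (m + r + 1) * σ i' : W)) := by
          rw [two_mul, Finset.prod_range_add]
      _ = (∏ r ∈ Finset.range m, delta ((p ^ (r + 1) * σ i' : W))) *
            ∏ r ∈ Finset.range m, delta ((p ^ (r + 1) * σ i' : W)) := by
          congr 1
          exact Finset.prod_congr rfl (fun r _ => hper (r + 1))
      _ = ∏ r ∈ Finset.range m,
            (delta ((p ^ (r + 1) * σ i' : W)) * delta ((p ^ (r + 1) * σ i' : W))) := by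
          rw [Finset.prod_mul_distrib]
      _ = 1 := Finset.prod_eq_one (fun r _ => delta_mul_self _)
  show (⟨delta (σ i) * kappa (σ i) (delta (σ i')), σ i * σ i'⟩ : (W → Z2) ⋊[kappa] W) ^ m = 1
  rw [sdp_pow, hL]
  show (⟨(1 : W → Z2), p ^ m⟩ : (W → Z2) ⋊[kappa] W) = 1
  rw [hpm]
  rfl

/-- The cocycle homomorphism. -/
noncomputable def theta : W →* (W → Z2) ⋊[kappa] W :=
  cs.lift ⟨fun i => ⟨delta (cs.simple i), cs.simple i⟩, liftable_aux cs⟩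

lemma theta_simple (i : B) :
    theta cs (σ i) = ⟨delta (σ i), σ i⟩ :=
  cs.lift_apply_simple (liftable_aux cs) i

lemma theta_right (w : W) : (theta cs w).right = w := by
  refine cs.simple_induction (p := fun u => (theta cs u).right = u) w (fun i => ?_) ?_
    (fun w w' hw hw' => ?_)
  · show ((theta cs) (cs.simple i)).right = cs.simple i
    rw [theta_simple]
  · show ((theta cs) (1 : W)).right = 1
    rw [map_one]; rfl
  · show ((theta cs) (w * w')).right = w * w'
    rw [map_mul, SemidirectProduct.mul_right]
    exact congrArg₂ (· * ·) hw hw' 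

/-- The parity cocycle. -/
noncomputable def nmap (w : W) : W → Z2 := (theta cs w).left

lemma nmap_mul (u v : W) : nmap cs (u * v) = nmap cs u * kappa u (nmap cs v) := by
  unfold nmap
  rw [map_mul, SemidirectProduct.mul_left, theta_right]

lemma nmap_simple (i : B) : nmap cs (σ i) = delta (σ i) := by
  unfold nmap; rw [theta_simple]

lemma nmap_one : nmap cs 1 = 1 := by
  unfold nmap; rw [map_one]; rfl

/-- If `t` does not occur in the left inversion sequence of `ω`, then the parity of `t`
in `π ω` is trivial. -/
lemma nmap_eq_one_of_not_mem (ω : List B) (t : W) (h : t ∉ cs.leftInvSeq ω) :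
    nmap cs (π ω) t = 1 := by
  induction ω using List.reverseRecOn with
  | nil => rw [cs.wordProd_nil, nmap_one]; rfl
  | append_singleton ω i ih =>
    have hconcat : cs.leftInvSeq (ω ++ [i]) =
        (cs.leftInvSeq ω).concat (π ω * σ i * (π ω)⁻¹) := by
      rw [← List.concat_eq_append]
      exact cs.leftInvSeq_concat ω i
    rw [hconcat, List.concat_eq_append, List.mem_append] at h
    push_neg at h
    obtain ⟨h₁, h₂⟩ := h
    have h₂' : t ≠ π ω * σ i * (π ω)⁻¹ := by simpa using h₂
    rw [cs.wordProd_append, cs.wordProd_singleton, nmap_mul, Pi.mul_apply,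
      nmap_simple, kappa_delta, ih h₁, one_mul]
    exact delta_of_ne h₂'

lemma nmap_refl_self (v : W) (i : B) :
    nmap cs (v * σ i * v⁻¹) (v * σ i * v⁻¹) = Multiplicative.ofAdd 1 := by
  revert i
  refine cs.simple_induction_left
    (p := fun v => ∀ i : B, nmap cs (v * σ i * v⁻¹) (v * σ i * v⁻¹) = Multiplicative.ofAdd 1)
    v ?_ ?_
  · intro i
    simp [nmap_simple]
  · intro v j ih i
    have hsj : σ j * σ j = 1 := by rw [← pow_two]; exact cs.simple_sq j
    have hx : σ j * v * σ i * (σ j * v)⁻¹ = σ j * ((v * σ i * v⁻¹) * σ j) := by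
      rw [mul_inv_rev, cs.inv_simple]; group
    rw [hx]
    set t' := v * σ i * v⁻¹ with ht'
    rw [nmap_mul, Pi.mul_apply, nmap_simple, kappa_apply, nmap_mul, Pi.mul_apply,
      kappa_apply, nmap_simple]
    have hY : (σ j)⁻¹ * (σ j * (t' * σ j)) * σ j = t' := by
      have h9 : (σ j)⁻¹ * (σ j * (t' * σ j)) * σ j = t' * (σ j * σ j) := by group
      rw [h9, hsj, mul_one]
    rw [hY]
    have hZ : t'⁻¹ * t' * t' = t' := by group
    rw [hZ]
    have hih : nmap cs t' t' = Multiplicative.ofAdd 1 := ih i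
    rw [hih]
    have hiff : σ j * (t' * σ j) = σ j ↔ t' = σ j := by
      constructor
      · intro he
        have h1 : t' * σ j = 1 := mul_left_cancel (a := σ j)
          (by rw [he, mul_one] : σ j * (t' * σ j) = σ j * 1)
        exact (eq_inv_of_mul_eq_one_left h1).trans (cs.inv_simple j)
      · intro he
        rw [he, hsj, mul_one]
    have haa : delta ((σ j : W)) (σ j * (t' * σ j)) = delta ((σ j : W)) t' := by
      unfold delta
      by_cases hcond : t' = cs.simple j
      · rw [if_pos (hiff.mpr hcond), if_pos hcond]
      · rw [if_neg (fun hh => hcond (hiff.mp hh)), if_neg hcond]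
    rw [haa]
    rw [mul_comm (Multiplicative.ofAdd (1 : ZMod 2)) (delta ((σ j : W)) t'), ← mul_assoc,
      Z2.sq, one_mul]

/-- If the parity is nontrivial then left multiplication by `t` shortens. -/
lemma length_lt_of_nmap (w : W) (t : W) (h : nmap cs w t = Multiplicative.ofAdd 1) :
    ℓ (t * w) < ℓ w := by
  obtain ⟨ω, hred, rfl⟩ := cs.exists_reduced_word' w
  have hmem : t ∈ cs.leftInvSeq ω := by
    by_contra hmem
    rw [nmap_eq_one_of_not_mem cs ω t hmem] at h
    exact Z2.one_ne h.symm
  obtain ⟨j, hj, hjt⟩ := List.mem_iff_getElem.mp hmem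
  have hj' : j < ω.length := by
    rw [← cs.length_leftInvSeq ω]; exact hj
  have hgetD : (cs.leftInvSeq ω).getD j 1 = t := by
    rw [List.getD_eq_getElem _ _ hj]
    exact hjt
  have hprod : t * π ω = π (ω.eraseIdx j) := by
    rw [← hgetD]; exact cs.getD_leftInvSeq_mul_wordProd ω j
  have hlen : ℓ (t * π ω) ≤ (ω.eraseIdx j).length := by
    rw [hprod]; exact cs.length_wordProd_le _
  have herase : (ω.eraseIdx j).length = ω.length - 1 := by
    rw [List.length_eraseIdx]
    simp [hj']
  rw [herase] at hlen
  have hred' : ω.length = ℓ (π ω) := hred.symm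
  omega

lemma nmap_of_length_lt (w : W) (t : W) (ht : cs.IsReflection t)
    (h : ℓ (t * w) < ℓ w) : nmap cs w t = Multiplicative.ofAdd 1 := by
  set w' := t * w with hw'
  have htt : t * t = 1 := ht.mul_self
  have hww : t * w' = w := by rw [hw', ← mul_assoc, htt, one_mul]
  have h2 : ℓ w' < ℓ (t * w') := by rw [hww]; exact h
  have h3 : nmap cs w' t = 1 := by
    rcases eq_or_ne (nmap cs w' t) (Multiplicative.ofAdd 1) with he | hne
    · exact absurd (length_lt_of_nmap cs w' t he) (by omega)
    · exact Z2.eq_one hne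
  obtain ⟨v, i, rfl⟩ := ht
  set t := v * σ i * v⁻¹
  have hntt : nmap cs t t = Multiplicative.ofAdd 1 := nmap_refl_self cs v i
  have hfinal : nmap cs w t = nmap cs t t * nmap cs w' t := by
    rw [← hww, nmap_mul, Pi.mul_apply, kappa_apply]
    congr 2
    group
  rw [hfinal, hntt, h3, mul_one]

/-- Strong exchange, right-hand version, for arbitrary words. -/
lemma right_exchange {ω : List B} {t : W} (ht : cs.IsReflection t)
    (h : ℓ (π ω * t) < ℓ (π ω)) :
    ∃ j < ω.length, π ω * t = π (ω.eraseIdx j) := by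
  have h1 : ℓ (t * (π ω)⁻¹) < ℓ ((π ω)⁻¹) := by
    have e1 : ℓ (t * (π ω)⁻¹) = ℓ (π ω * t) := by
      rw [← cs.length_inv (t * (π ω)⁻¹)]
      congr 1
      rw [mul_inv_rev, inv_inv, ht.inv]
    rw [e1, cs.length_inv]
    exact h
  have h2 : nmap cs ((π ω)⁻¹) t = Multiplicative.ofAdd 1 :=
    nmap_of_length_lt cs _ t ht h1
  have h3 : (π ω)⁻¹ = π ω.reverse := (cs.wordProd_reverse ω).symm
  rw [h3] at h2
  have hmem : t ∈ cs.leftInvSeq ω.reverse := by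
    by_contra hmem
    rw [nmap_eq_one_of_not_mem cs _ t hmem] at h2
    exact Z2.one_ne h2.symm
  rw [cs.leftInvSeq_reverse, List.mem_reverse] at hmem
  obtain ⟨j, hj, hjt⟩ := List.mem_iff_getElem.mp hmem
  have hj' : j < ω.length := by
    rw [← cs.length_rightInvSeq ω]; exact hj
  refine ⟨j, hj', ?_⟩
  have hgetD : (cs.rightInvSeq ω).getD j 1 = t := by
    rw [List.getD_eq_getElem _ _ hj]
    exact hjt
  rw [← hgetD]
  exact cs.wordProd_mul_getD_rightInvSeq ω j

variable (J : Set B)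

lemma wordProd_mem_closure {ω : List B} (hω : ∀ b ∈ ω, b ∈ J) :
    π ω ∈ Subgroup.closure (cs.simple '' J) := by
  induction ω with
  | nil => rw [cs.wordProd_nil]; exact one_mem _
  | cons i ω ih =>
    rw [cs.wordProd_cons]
    exact mul_mem (Subgroup.subset_closure ⟨i, hω i List.mem_cons_self, rfl⟩)
      (ih (fun b hb => hω b (List.mem_cons_of_mem _ hb)))

lemma exists_word_of_mem_closure {u : W} (hu : u ∈ Subgroup.closure (cs.simple '' J)) :
    ∃ ω : List B, (∀ b ∈ ω, b ∈ J) ∧ π ω = u := by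
  induction hu using Subgroup.closure_induction with
  | mem z hz =>
    obtain ⟨i, hi, rfl⟩ := hz
    exact ⟨[i], by simpa using hi, cs.wordProd_singleton i⟩
  | one => exact ⟨[], by simp, cs.wordProd_nil⟩
  | mul z z' _ _ hz hz' =>
    obtain ⟨ω, hω, rfl⟩ := hz
    obtain ⟨ω', hω', rfl⟩ := hz'
    exact ⟨ω ++ ω', by
      intro b hb
      rcases List.mem_append.mp hb with h | h
      exacts [hω b h, hω' b h], cs.wordProd_append ω ω'⟩
  | inv z _ hz =>
    obtain ⟨ω, hω, rfl⟩ := hz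
    exact ⟨ω.reverse, fun b hb => hω b (List.mem_reverse.mp hb), cs.wordProd_reverse ω⟩

/-- Key lemma: if `x` is minimal in `x W_J` and `ω` is a `J`-word of minimal length among
`J`-words with the same product, then lengths add. -/
lemma length_add_of_minimal (x : W)
    (hxJ : ∀ u ∈ Subgroup.closure (cs.simple '' J), ℓ x ≤ ℓ (x * u)) :
    ∀ n : ℕ, ∀ ω : List B, ω.length = n → (∀ b ∈ ω, b ∈ J) →
      (∀ ω₂ : List B, (∀ b ∈ ω₂, b ∈ J) → π ω₂ = π ω → n ≤ ω₂.length) →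
      ℓ (x * π ω) = ℓ x + n := by
  intro n
  induction n using Nat.strong_induction_on with
  | _ n ih =>
    intro ω hlen hJ hmin
    match n, hlen with
    | 0, hlen =>
      have hnil : ω = [] := List.length_eq_zero_iff.mp hlen
      subst hnil
      rw [cs.wordProd_nil, mul_one, Nat.add_zero]
    | (n' + 1), hlen =>
      rcases List.eq_nil_or_concat ω with rfl | ⟨ω', j, rfl⟩
      · simp at hlen
      rw [List.concat_eq_append] at hlen hJ hmin ⊢
      have hlen' : ω'.length = n' := by
        simpa using hlen
      have hJ' : ∀ b ∈ ω', b ∈ J := fun b hb => hJ b (List.mem_append_left _ hb)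
      have hjJ : j ∈ J := hJ j (List.mem_append_right _ (List.mem_singleton_self j))
      have hmin' : ∀ ω₂ : List B, (∀ b ∈ ω₂, b ∈ J) → π ω₂ = π ω' → n' ≤ ω₂.length := by
        intro ω₂ hω₂ hprod
        have h := hmin (ω₂ ++ [j]) (by
          intro b hb
          rcases List.mem_append.mp hb with h | h
          · exact hω₂ b h
          · rw [List.mem_singleton.mp h]; exact hjJ) (by
          rw [cs.wordProd_append, cs.wordProd_append, hprod])
        simpa using h
      have IH : ℓ (x * π ω') = ℓ x + n' := ih n' (Nat.lt_succ_self n') ω' hlen' hJ' hmin'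
      have hsplit : π (ω' ++ [j]) = π ω' * σ j := by
        rw [cs.wordProd_append, cs.wordProd_singleton]
      rcases cs.length_mul_simple (x * π ω') j with hup | hdown
      · rw [hsplit, ← mul_assoc, hup, IH]
        omega
      · -- descent case: derive a contradiction
        exfalso
        obtain ⟨ωx, hωxlen, hωx⟩ := cs.exists_reduced_word x
        set σω := ωx ++ ω' with hσω
        have hπσ : π σω = x * π ω' := by
          rw [hσω, cs.wordProd_append, ← hωx]
        have hlt : ℓ (π σω * σ j) < ℓ (π σω) := by
          rw [hπσ]
          omega
        obtain ⟨idx, hidx, hexch⟩ := right_exchange cs (cs.isReflection_simple j) hlt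
        rcases lt_or_ge idx ωx.length with hcase | hcase
        · -- the deleted letter is in the `x` part
          have herase : σω.eraseIdx idx = ωx.eraseIdx idx ++ ω' := by
            rw [hσω]
            exact List.eraseIdx_append_of_lt_length hcase _
          rw [hπσ, herase, cs.wordProd_append] at hexch
          set u : W := π ω' * σ j * (π ω')⁻¹ with hu
          have hxu : x * u = π (ωx.eraseIdx idx) := by
            rw [hu]
            calc x * (π ω' * σ j * (π ω')⁻¹)
                = (x * π ω' * σ j) * (π ω')⁻¹ := by group
              _ = (π (ωx.eraseIdx idx) * π ω') * (π ω')⁻¹ := by rw [hexch]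
              _ = π (ωx.eraseIdx idx) := by group
          have humem : u ∈ Subgroup.closure (cs.simple '' J) := by
            rw [hu]
            exact mul_mem (mul_mem (wordProd_mem_closure cs J hJ')
              (Subgroup.subset_closure ⟨j, hjJ, rfl⟩))
              (inv_mem (wordProd_mem_closure cs J hJ'))
          have h5 : ℓ x ≤ ℓ (x * u) := hxJ u humem
          have h6 : ℓ (x * u) ≤ (ωx.eraseIdx idx).length := by
            rw [hxu]; exact cs.length_wordProd_le _
          have h7 : (ωx.eraseIdx idx).length = ωx.length - 1 := by
            rw [List.length_eraseIdx]
            simp [hcase]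
          have hr : ℓ x = ωx.length := by rw [hωx]; exact hωxlen
          omega
        · -- the deleted letter is in the `ω'` part, contradicting minimality
          have herase : σω.eraseIdx idx = ωx ++ ω'.eraseIdx (idx - ωx.length) := by
            rw [hσω]
            exact List.eraseIdx_append_of_length_le hcase _
          rw [hπσ, herase, cs.wordProd_append, ← hωx, mul_assoc] at hexch
          have h8 : π ω' * σ j = π (ω'.eraseIdx (idx - ωx.length)) :=
            mul_left_cancel hexch
          have h9 : π (ω'.eraseIdx (idx - ωx.length)) = π (ω' ++ [j]) := by
            rw [hsplit, h8]
          have h10 := hmin (ω'.eraseIdx (idx - ωx.length)) (by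
            intro b hb
            exact hJ' b (List.mem_of_mem_eraseIdx hb)) h9
          have h11 : (ω'.eraseIdx (idx - ωx.length)).length ≤ ω'.length :=
            (List.eraseIdx_sublist _ _).length_le
          omega

end CoxAux

open CoxAux

/-- Lemma 1.3(1): if `w` is minimal in `W_K w`, `w⁻¹ K w ⊆ J`, and `w = x y` with
`x ∈ ᴷW^J` and `y ∈ W_J`, then `x⁻¹ K x ⊆ J`. -/
theorem minimal_coset_rep_conj_simple_subset
    {B W : Type*} [Group W] {M : CoxeterMatrix B} (cs : CoxeterSystem M W)
    (J K : Set B) (w x y : W)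
    (hwmin : ∀ u ∈ Subgroup.closure (cs.simple '' K), cs.length w ≤ cs.length (u * w))
    (hwK : ∀ k ∈ K, ∃ j ∈ J, w⁻¹ * cs.simple k * w = cs.simple j)
    (hxK : ∀ u ∈ Subgroup.closure (cs.simple '' K), cs.length x ≤ cs.length (u * x))
    (hxJ : ∀ u ∈ Subgroup.closure (cs.simple '' J), cs.length x ≤ cs.length (x * u))
    (hy : y ∈ Subgroup.closure (cs.simple '' J))
    (hxy : w = x * y) :
    ∀ k ∈ K, ∃ j ∈ J, x⁻¹ * cs.simple k * x = cs.simple j := by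
  intro k hk
  obtain ⟨j, hjJ, hconj⟩ := hwK k hk
  set t : W := x⁻¹ * cs.simple k * x with ht
  have hskw : cs.simple k * w = w * cs.simple j := by
    have h := congrArg (fun z => w * z) hconj
    simpa [mul_assoc] using h
  have hxw : x = w * y⁻¹ := by rw [hxy]; group
  have htyy : t = y * cs.simple j * y⁻¹ := by
    rw [ht]
    calc x⁻¹ * cs.simple k * x = (w * y⁻¹)⁻¹ * cs.simple k * (w * y⁻¹) := by rw [← hxw]
      _ = y * (w⁻¹ * cs.simple k * w) * y⁻¹ := by group
      _ = y * cs.simple j * y⁻¹ := by rw [hconj]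
  have htmem : t ∈ Subgroup.closure (cs.simple '' J) := by
    rw [htyy]
    exact mul_mem (mul_mem hy (Subgroup.subset_closure ⟨j, hjJ, rfl⟩)) (inv_mem hy)
  have hxt : x * t = cs.simple k * x := by rw [ht]; group
  have hskmem : cs.simple k ∈ Subgroup.closure (cs.simple '' K) :=
    Subgroup.subset_closure ⟨k, hk, rfl⟩
  have hlen : cs.length (x * t) = cs.length x + 1 := by
    rw [hxt]
    rcases cs.length_simple_mul x k with h | h
    · exact h
    · have h2 := hxK (cs.simple k) hskmem
      omega
  obtain ⟨ω₀, hω₀J, hω₀⟩ := exists_word_of_mem_closure cs J htmem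
  have hex : ∃ n : ℕ, ∃ ω : List B, ω.length = n ∧ (∀ b ∈ ω, b ∈ J) ∧ cs.wordProd ω = t :=
    ⟨ω₀.length, ω₀, rfl, hω₀J, hω₀⟩
  classical
  obtain ⟨ω, hωlen, hωJ, hωt⟩ := Nat.find_spec hex
  have hmin : ∀ ω₂ : List B, (∀ b ∈ ω₂, b ∈ J) → cs.wordProd ω₂ = cs.wordProd ω →
      Nat.find hex ≤ ω₂.length := by
    intro ω₂ hω₂J hprod
    exact Nat.find_min' hex ⟨ω₂, rfl, hω₂J, by rw [hprod, hωt]⟩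
  have hadd := length_add_of_minimal cs J x hxJ (Nat.find hex) ω hωlen hωJ hmin
  rw [hωt, hlen] at hadd
  have hn1 : Nat.find hex = 1 := by omega
  rw [hn1] at hωlen
  obtain ⟨j', rfl⟩ := List.length_eq_one_iff.mp hωlen
  have hj'J : j' ∈ J := hωJ j' (List.mem_singleton_self j')
  refine ⟨j', hj'J, ?_⟩
  rw [← hωt, cs.wordProd_singleton]
end

section
/- Let (W, I) be a Coxeter group and let u, w ∈ W. The set {v w : v ≤ u} (where ≤ is Bruhat order) contains a unique minimal element y with respect to Bruhat order; moreover ℓ(y) = ℓ(w) − ℓ(y w⁻¹). -/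
open CoxeterSystem

variable {B W : Type*} [Group W] {M : CoxeterMatrix B}

/-- Bruhat order on a Coxeter group: `u ≤ w` iff some reduced word of `w` admits a
subword whose product is `u`. -/
def BruhatLE (cs : CoxeterSystem M W) (u w : W) : Prop :=
  ∃ ω : List B, cs.IsReduced ω ∧ w = cs.wordProd ω ∧
    ∃ ω' : List B, ω'.Sublist ω ∧ u = cs.wordProd ω'

namespace BruhatAux

open List

open scoped Classical

noncomputable section

variable (cs : CoxeterSystem M W)

local prefix:100 "σ" => cs.simple
local prefix:100 "π" => cs.wordProd
local prefix:100 "ℓ" => cs.length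
local prefix:100 "ris" => cs.rightInvSeq

/-- The sign-action function of a simple reflection on `W × ℤˣ`. -/
def etaFun (i : B) : W × ℤˣ → W × ℤˣ :=
  fun p => (σ i * p.1 * σ i, if p.1 = σ i then -p.2 else p.2)

theorem etaFun_involutive (i : B) : Function.Involutive (etaFun cs i) := by
  rintro ⟨t, ε⟩
  have h1 : σ i * (σ i * t * σ i) * σ i = t := by
    simp [mul_assoc]
  have h2 : (σ i * t * σ i = σ i) ↔ t = σ i := by
    constructor
    · intro h
      have := congrArg (fun x => σ i * x * σ i) h
      simpa [mul_assoc] using this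
    · rintro rfl; simp
  by_cases h : t = σ i
  · subst h
    simp [etaFun]
  · simp only [etaFun, if_neg h, h2, if_neg h, h1]

/-- The sign action of a simple reflection, as a permutation. -/
def eta (i : B) : Equiv.Perm (W × ℤˣ) := (etaFun_involutive cs i).toPerm

theorem eta_apply (i : B) (p : W × ℤˣ) :
    eta cs i p = (σ i * p.1 * σ i, if p.1 = σ i then -p.2 else p.2) := rfl

/-- Product of sign actions along a word. -/
def Fw (ω : List B) : Equiv.Perm (W × ℤˣ) := (ω.map (eta cs)).prod

theorem Fw_nil : Fw cs [] = 1 := rfl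

theorem Fw_cons (i : B) (ω : List B) : Fw cs (i :: ω) = eta cs i * Fw cs ω := by
  simp [Fw]

theorem rightInvSeq_cons (i : B) (ω : List B) :
    ris (i :: ω) = ((π ω)⁻¹ * σ i * π ω) :: ris ω := rfl

theorem Fw_apply (ω : List B) (t : W) (ε : ℤˣ) :
    Fw cs ω (t, ε) = (π ω * t * (π ω)⁻¹, (-1 : ℤˣ) ^ ((ris ω).count t) * ε) := by
  induction ω generalizing t ε with
  | nil => simp [Fw_nil]
  | cons i ω ih =>
      rw [Fw_cons]
      have : (eta cs i * Fw cs ω) (t, ε) = eta cs i (Fw cs ω (t, ε)) := rfl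
      rw [this, ih, eta_apply]
      simp only [rightInvSeq_cons, List.count_cons, beq_iff_eq]
      have hfirst : σ i * (π ω * t * (π ω)⁻¹) * σ i
          = π (i :: ω) * t * (π (i :: ω))⁻¹ := by
        rw [cs.wordProd_cons]
        simp [mul_assoc]
      have hcond : (π ω * t * (π ω)⁻¹ = σ i) ↔ (t = (π ω)⁻¹ * σ i * π ω) := by
        constructor
        · intro h
          rw [← h]; group
        · intro h
          rw [h]; group
      by_cases h : t = (π ω)⁻¹ * σ i * π ω
      · rw [if_pos (hcond.mpr h), if_pos h.symm]
        rw [hfirst]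
        rw [pow_succ]
        rw [Prod.mk.injEq]
        refine ⟨rfl, by rw [mul_neg_one, neg_mul]⟩
      · rw [if_neg (fun hc => h (hcond.mp hc)), if_neg (fun hc => h hc.symm)]
        rw [hfirst]
        simp

theorem mul_pow_mul_eq (a b : W) (n : ℕ) : (a * b) ^ n * a = a * (b * a) ^ n := by
  induction n with
  | zero => simp
  | succ n ih =>
      rw [pow_succ', mul_assoc, ih, pow_succ', ← mul_assoc, ← mul_assoc, ← mul_assoc]

theorem pi_altWord_period (i j : B) (l : ℕ) :
    π (alternatingWord i j (l + 2 * M i j)) = π (alternatingWord i j l) := by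
  rw [cs.prod_alternatingWord_eq_mul_pow, cs.prod_alternatingWord_eq_mul_pow]
  have he : Even (l + 2 * M i j) ↔ Even l := by
    simp [Nat.even_add]
  have hd : (l + 2 * M i j) / 2 = l / 2 + M i j := by
    omega
  rw [hd, pow_add, cs.simple_mul_simple_pow, mul_one]
  by_cases h : Even l
  · rw [if_pos (he.mpr h), if_pos h]
  · rw [if_neg (fun hc => h (he.mp hc)), if_neg h]

theorem conj_pi_altWord (i j : B) (r : ℕ) :
    σ j * π (alternatingWord j i (2 * r + 1)) * σ j = π (alternatingWord i j (2 * r + 3)) := by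
  have h1 : π (alternatingWord j i (2 * r + 1))
      = σ i * (σ j * σ i) ^ r := by
    rw [cs.prod_alternatingWord_eq_mul_pow]
    have : ¬ Even (2 * r + 1) := by simp [Nat.even_add_one, Nat.even_mul]
    rw [if_neg this]
    have hh : (2 * r + 1) / 2 = r := by omega
    rw [hh]
  have h2 : π (alternatingWord i j (2 * r + 3))
      = σ j * (σ i * σ j) ^ (r + 1) := by
    rw [cs.prod_alternatingWord_eq_mul_pow]
    have : ¬ Even (2 * r + 3) := by simp [Nat.even_add_one, Nat.even_mul]
    rw [if_neg this]
    have hh : (2 * r + 3) / 2 = r + 1 := by omega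
    rw [hh]
  rw [h1, h2]
  have : (σ j * σ i) ^ r * σ j = σ j * (σ i * σ j) ^ r := mul_pow_mul_eq _ _ _
  calc σ j * (σ i * (σ j * σ i) ^ r) * σ j
      = (σ j * σ i) * ((σ j * σ i) ^ r * σ j) := by group
    _ = (σ j * σ i) * (σ j * (σ i * σ j) ^ r) := by rw [this]
    _ = σ j * (σ i * σ j) ^ (r + 1) := by rw [pow_succ']; simp [mul_assoc]

theorem ris_alternatingWord (i j : B) (m : ℕ) :
    ris (alternatingWord i j m)
      = (((List.range m).map (fun k => π (alternatingWord i j (2 * k + 1)))).reverse) := by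
  induction m generalizing i j with
  | zero => simp [alternatingWord]
  | succ m ih =>
      rw [alternatingWord_succ, cs.rightInvSeq_concat, ih j i]
      rw [List.map_reverse, List.concat_eq_append]
      rw [List.range_succ_eq_map, List.map_cons, List.reverse_cons]
      congr 1
      · congr 1
        rw [List.map_map, List.map_map]
        apply List.map_congr_left
        intro k _
        show MulAut.conj (σ j) (π (alternatingWord j i (2 * k + 1)))
            = π (alternatingWord i j (2 * (k + 1) + 1))
        rw [MulAut.conj_apply, cs.inv_simple]
        have harg : 2 * (k + 1) + 1 = 2 * k + 3 := by omega
        rw [harg]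
        exact conj_pi_altWord cs i j k
      · have : alternatingWord i j (2 * 0 + 1) = [j] := rfl
        rw [this]
        simp [wordProd]

theorem count_ris_braidWord_even (i j : B) (t : W) :
    Even ((ris (alternatingWord i j (2 * M i j))).count t) := by
  rw [ris_alternatingWord, List.count_reverse]
  have h2m : 2 * M i j = M i j + M i j := by omega
  rw [h2m, List.range_add, List.map_append, List.count_append]
  have : (List.range (M i j)).map
        ((fun k => π (alternatingWord i j (2 * k + 1))) ∘ (fun x => M i j + x))
      = (List.range (M i j)).map (fun k => π (alternatingWord i j (2 * k + 1))) := by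
    apply List.map_congr_left
    intro k _
    show π (alternatingWord i j (2 * (M i j + k) + 1)) = π (alternatingWord i j (2 * k + 1))
    have harg : 2 * (M i j + k) + 1 = (2 * k + 1) + 2 * M i j := by omega
    rw [harg, pi_altWord_period]
  rw [List.map_map, this]
  exact ⟨_, rfl⟩

theorem Fw_even_pow (i j : B) (m : ℕ) :
    Fw cs (alternatingWord i j (2 * m)) = (eta cs i * eta cs j) ^ m := by
  induction m with
  | zero => simp [alternatingWord, Fw]
  | succ m ih =>
      have h1 : 2 * (m + 1) = (2 * m + 1) + 1 := by omega
      rw [h1, alternatingWord_succ' i j, alternatingWord_succ' i j]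
      have hodd : ¬ Even (2 * m + 1) := by simp [Nat.even_add_one, Nat.even_mul]
      have heven : Even (2 * m) := ⟨m, by omega⟩
      rw [if_neg hodd, if_pos heven]
      rw [Fw_cons, Fw_cons, ih, pow_succ']
      rw [mul_assoc]

theorem eta_liftable : M.IsLiftable (eta cs) := by
  intro i j
  have h1 : (eta cs i * eta cs j) ^ M i j = Fw cs (alternatingWord i j (2 * M i j)) :=
    (Fw_even_pow cs i j (M i j)).symm
  rw [h1]
  refine Equiv.ext ?_
  rintro ⟨t, ε⟩
  have hπ : π (alternatingWord i j (2 * M i j)) = 1 := by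
    rw [cs.prod_alternatingWord_eq_mul_pow]
    have : Even (2 * M i j) := ⟨M i j, by omega⟩
    rw [if_pos this]
    have : 2 * M i j / 2 = M i j := by omega
    rw [this, cs.simple_mul_simple_pow, one_mul]
  rw [Fw_apply, hπ, (count_ris_braidWord_even cs i j t).neg_one_pow]
  simp

/-- The sign representation `W →* Perm (W × ℤˣ)`. -/
def theta : W →* Equiv.Perm (W × ℤˣ) := cs.lift ⟨eta cs, eta_liftable cs⟩

theorem theta_simple (i : B) : theta cs (σ i) = eta cs i :=
  cs.lift_apply_simple (eta_liftable cs) i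

theorem theta_wordProd (ω : List B) : theta cs (π ω) = Fw cs ω := by
  unfold Fw
  rw [wordProd, map_list_prod, List.map_map]
  congr 1
  apply List.map_congr_left
  intro k _
  exact theta_simple cs k

/-- The sign character: `csgn w t = -1` iff `t` is a "right inversion" of `w` counted with sign. -/
def csgn (w t : W) : ℤˣ := (theta cs w (t, 1)).2

theorem csgn_wordProd (ω : List B) (t : W) :
    csgn cs (π ω) t = (-1 : ℤˣ) ^ ((ris ω).count t) := by
  unfold csgn
  rw [theta_wordProd, Fw_apply, mul_one]

theorem theta_apply (w t : W) (ε : ℤˣ) :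
    theta cs w (t, ε) = (w * t * w⁻¹, csgn cs w t * ε) := by
  obtain ⟨ω, _, rfl⟩ := cs.exists_reduced_word' w
  rw [theta_wordProd, Fw_apply, csgn_wordProd]

theorem csgn_mul (w w' t : W) :
    csgn cs (w * w') t = csgn cs w (w' * t * w'⁻¹) * csgn cs w' t := by
  have h1 : theta cs (w * w') (t, 1) = theta cs w (theta cs w' (t, 1)) := by
    rw [map_mul]; rfl
  have h2 : theta cs w (theta cs w' (t, 1))
      = (w * (w' * t * w'⁻¹) * w⁻¹, csgn cs w (w' * t * w'⁻¹) * (csgn cs w' t * 1)) := by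
    rw [theta_apply cs w', theta_apply cs w]
  have hs := congrArg Prod.snd (h1.trans h2)
  rw [theta_apply cs (w * w')] at hs
  simpa using hs

theorem csgn_one (t : W) : csgn cs 1 t = 1 := by
  unfold csgn
  rw [map_one]
  rfl

theorem units_self_inv (u : ℤˣ) : u * u = 1 := by
  rcases Int.units_eq_one_or u with rfl | rfl <;> rfl

theorem csgn_inv_conj (w t : W) : csgn cs w⁻¹ (w * t * w⁻¹) = csgn cs w t := by
  have h := csgn_mul cs w⁻¹ w t
  rw [inv_mul_cancel, csgn_one] at h
  have h2 := congrArg (fun x => x * csgn cs w t) h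
  simp only [one_mul] at h2
  rw [mul_assoc, units_self_inv, mul_one] at h2
  exact h2.symm

theorem csgn_simple (i : B) (t : W) :
    csgn cs (σ i) t = if t = σ i then -1 else 1 := by
  have h1 : csgn cs (σ i) t = (-1 : ℤˣ) ^ (List.count t [σ i]) := by
    have hh := csgn_wordProd cs [i] t
    rw [cs.rightInvSeq_singleton] at hh
    rw [show π [i] = σ i by simp [wordProd]] at hh
    exact hh
  rw [h1]
  by_cases ht : t = σ i
  · subst ht
    simp
  · rw [if_neg ht]
    have : List.count t [σ i] = 0 := by
      simp [List.count_singleton', ht, Ne.symm ht]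
    rw [this, pow_zero]

theorem csgn_refl_self {t : W} (ht : cs.IsReflection t) : csgn cs t t = -1 := by
  obtain ⟨u, i, rfl⟩ := ht
  have h1 : u * σ i * u⁻¹ = u * (σ i * u⁻¹) := by group
  nth_rw 1 [h1]
  rw [csgn_mul, csgn_mul]
  have e1 : u⁻¹ * (u * σ i * u⁻¹) * u⁻¹⁻¹ = σ i := by group
  have e2 : σ i * u⁻¹ * (u * σ i * u⁻¹) * (σ i * u⁻¹)⁻¹ = σ i * σ i * (σ i)⁻¹ := by group
  have e2' : σ i * σ i * (σ i)⁻¹ = σ i := by group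
  rw [e1, e2, e2', csgn_simple, if_pos rfl]
  have e3 : csgn cs u⁻¹ (u * σ i * u⁻¹) = csgn cs u (σ i) := csgn_inv_conj cs u (σ i)
  rw [e3]
  rw [neg_one_mul, mul_neg, units_self_inv]

theorem csgn_eq_one (n : ℕ) : ∀ w t : W, ℓ w = n → cs.IsReflection t →
    ℓ w < ℓ (w * t) → csgn cs w t = 1 := by
  induction n using Nat.strong_induction_on with
  | _ n ih =>
    intro w t hlen ht hlt
    rcases n with _ | n
    · have : w = 1 := cs.length_eq_zero_iff.mp hlen
      rw [this, csgn_one]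
    · obtain ⟨ω, hred, hw⟩ := cs.exists_reduced_word' w
      have hlenω : ω.length = n + 1 := by
        have := hred
        unfold CoxeterSystem.IsReduced at this
        rw [← hw] at this
        omega
      rcases ω with _ | ⟨i, ω₁⟩
      · simp at hlenω
      · have hω₁red : cs.IsReduced ω₁ := by
          have := hred.drop 1
          simpa using this
        set w' := π ω₁ with hw'
        have hlw' : ℓ w' = n := by
          have h1 : (ω₁ : List B).length = n := by simpa using hlenω
          rw [← h1]
          exact hω₁red
        have hwc : w = σ i * w' := by rw [hw, cs.wordProd_cons]
        by_cases hcase : w' * t * w'⁻¹ = σ i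
        · exfalso
          have : w * t = w' := by
            rw [hwc]
            have : w' * t = σ i * w' := by
              have := congrArg (· * w') hcase
              simpa [mul_assoc] using this
            rw [mul_assoc, this, ← mul_assoc, cs.simple_mul_simple_self, one_mul]
          rw [this] at hlt
          omega
        · rw [hwc, csgn_mul, csgn_simple, if_neg hcase, one_mul]
          rcases Nat.lt_or_ge (ℓ w') (ℓ (w' * t)) with hc | hc
          · exact ih n (by omega) w' t hlw' ht hc
          · exfalso
            have hne : ℓ (w' * t) ≠ ℓ w' := ht.length_mul_left_ne w'
            have hlt2 : ℓ (w' * t) < ℓ w' := by omega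
            have : ℓ (w * t) ≤ ℓ (w' * t) + 1 := by
              rw [hwc, mul_assoc]
              calc ℓ (σ i * (w' * t)) ≤ ℓ (σ i) + ℓ (w' * t) := cs.length_mul_le _ _
                _ = ℓ (w' * t) + 1 := by rw [cs.length_simple]; omega
            omega

theorem csgn_neg_iff {w t : W} (ht : cs.IsReflection t) :
    csgn cs w t = -1 ↔ ℓ (w * t) < ℓ w := by
  constructor
  · intro h
    by_contra hc
    have hne : ℓ (w * t) ≠ ℓ w := ht.length_mul_left_ne w
    have : ℓ w < ℓ (w * t) := by omega
    rw [csgn_eq_one cs (ℓ w) w t rfl ht this] at h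
    exact absurd h (by decide)
  · intro h
    have h1 : csgn cs ((w * t) * t) t = csgn cs (w * t) (t * t * t⁻¹) * csgn cs t t :=
      csgn_mul cs (w * t) t t
    have h2 : (w * t) * t = w := by
      rw [mul_assoc, ht.mul_self, mul_one]
    have h3 : t * t * t⁻¹ = t := by group
    rw [h2, h3, csgn_refl_self cs ht] at h1
    have h4 : ℓ (w * t) < ℓ ((w * t) * t) := by rw [h2]; exact h
    rw [csgn_eq_one cs (ℓ (w * t)) (w * t) t rfl ht h4] at h1
    rw [h1, one_mul]

theorem mem_ris_of_inversion {ω : List B} {t : W} (ht : cs.IsReflection t)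
    (h : ℓ (π ω * t) < ℓ (π ω)) : t ∈ ris ω := by
  have hc : csgn cs (π ω) t = -1 := (csgn_neg_iff cs ht).mpr h
  rw [csgn_wordProd] at hc
  by_contra hmem
  have : (ris ω).count t = 0 := List.count_eq_zero.mpr hmem
  rw [this, pow_zero] at hc
  exact absurd hc.symm (by decide)

theorem exchange_right {ω : List B} {t : W} (ht : cs.IsReflection t)
    (h : ℓ (π ω * t) < ℓ (π ω)) :
    ∃ j < ω.length, π ω * t = π (ω.eraseIdx j) := by
  have hmem := mem_ris_of_inversion cs ht h
  obtain ⟨j, hj, hjt⟩ := List.mem_iff_getElem.mp hmem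
  have hj' : j < ω.length := by
    rw [cs.length_rightInvSeq] at hj
    exact hj
  refine ⟨j, hj', ?_⟩
  have : t = (ris ω).getD j 1 := by
    rw [List.getD_eq_getElem _ _ hj, hjt]
  rw [this]
  exact cs.wordProd_mul_getD_rightInvSeq ω j

theorem mem_lis_of_inversion {ω : List B} {t : W} (ht : cs.IsReflection t)
    (h : ℓ (t * π ω) < ℓ (π ω)) : t ∈ cs.leftInvSeq ω := by
  have h1 : ℓ (π ω.reverse * t) < ℓ (π ω.reverse) := by
    rw [cs.wordProd_reverse]
    have e1 : (π ω)⁻¹ * t = (t * π ω)⁻¹ := by rw [mul_inv_rev, ht.inv]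
    rw [e1, cs.length_inv, cs.length_inv]
    exact h
  have := mem_ris_of_inversion cs ht h1
  rw [cs.rightInvSeq_reverse] at this
  exact List.mem_reverse.mp this

theorem exchange_left {ω : List B} {t : W} (ht : cs.IsReflection t)
    (h : ℓ (t * π ω) < ℓ (π ω)) :
    ∃ j < ω.length, t * π ω = π (ω.eraseIdx j) := by
  have hmem := mem_lis_of_inversion cs ht h
  obtain ⟨j, hj, hjt⟩ := List.mem_iff_getElem.mp hmem
  have hj' : j < ω.length := by
    rw [cs.length_leftInvSeq] at hj
    exact hj
  refine ⟨j, hj', ?_⟩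
  have : t = (cs.leftInvSeq ω).getD j 1 := by
    rw [List.getD_eq_getElem _ _ hj, hjt]
  rw [this]
  exact cs.getD_leftInvSeq_mul_wordProd ω j

/-! ### Deletion -/

theorem isReduced_nil : cs.IsReduced [] := by
  unfold CoxeterSystem.IsReduced
  simp

theorem del_one {ω : List B} (h : ¬ cs.IsReduced ω) :
    ∃ ω' : List B, ω' <+ ω ∧ ω'.length < ω.length ∧ π ω' = π ω := by
  have hex : ∃ k, ¬ cs.IsReduced (ω.take k) := ⟨ω.length, by rwa [List.take_length]⟩
  have hk : ¬ cs.IsReduced (ω.take (Nat.find hex)) := Nat.find_spec hex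
  have hmin : ∀ m, m < Nat.find hex → cs.IsReduced (ω.take m) :=
    fun m hm => not_not.mp (Nat.find_min hex hm)
  have hkle : Nat.find hex ≤ ω.length := Nat.find_min' hex (by rwa [List.take_length])
  rcases Nat.eq_zero_or_pos (Nat.find hex) with h0 | hpos
  · exfalso
    rw [h0] at hk
    exact hk (by simpa using isReduced_nil cs)
  · obtain ⟨k₀, hk₀⟩ : ∃ k₀, Nat.find hex = k₀ + 1 := ⟨Nat.find hex - 1, by omega⟩
    have hk₀lt : k₀ < ω.length := by omega
    have hαred : cs.IsReduced (ω.take k₀) := hmin k₀ (by omega)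
    set α := ω.take k₀ with hα
    have hαlen : α.length = k₀ := by
      rw [hα, List.length_take]; omega
    have htake : ω.take (k₀ + 1) = α ++ [ω[k₀]] := by
      rw [hα, ← List.take_concat_get hk₀lt, List.concat_eq_append]
    have hπtake : π (ω.take (k₀ + 1)) = π α * σ (ω[k₀]) := by
      rw [htake, cs.wordProd_append]
      simp [wordProd]
    have hnotred : ¬ cs.IsReduced (ω.take (k₀ + 1)) := by rwa [hk₀] at hk
    have hlstep : ℓ (π α * σ (ω[k₀])) < ℓ (π α) := by
      rcases cs.length_mul_simple (π α) (ω[k₀]) with hup | hdown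
      · exfalso
        apply hnotred
        unfold CoxeterSystem.IsReduced
        rw [hπtake, hup, List.length_take]
        have : ℓ (π α) = k₀ := by rw [← hαlen]; exact hαred
        omega
      · have : ℓ (π α) = k₀ := by rw [← hαlen]; exact hαred
        omega
    obtain ⟨j, hj, hjer⟩ := exchange_right cs (cs.isReflection_simple (ω[k₀])) hlstep
    refine ⟨α.eraseIdx j ++ ω.drop (k₀ + 1), ?_, ?_, ?_⟩
    · have h1 : α.eraseIdx j <+ α := List.eraseIdx_sublist α j
      have h2 : ω.drop (k₀ + 1) <+ ω.drop k₀ := by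
        rw [List.drop_eq_getElem_cons hk₀lt]
        exact List.sublist_cons_self _ _
      have h3 : α.eraseIdx j ++ ω.drop (k₀ + 1) <+ α ++ ω.drop k₀ := h1.append h2
      rwa [hα, List.take_append_drop] at h3
    · rw [List.length_append, List.length_eraseIdx_of_lt (by omega), List.length_drop, hαlen]
      omega
    · calc π (α.eraseIdx j ++ ω.drop (k₀ + 1))
          = π (α.eraseIdx j) * π (ω.drop (k₀ + 1)) := cs.wordProd_append _ _
        _ = π (ω.take (k₀ + 1)) * π (ω.drop (k₀ + 1)) := by rw [← hjer, hπtake]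
        _ = π (ω.take (k₀ + 1) ++ ω.drop (k₀ + 1)) := (cs.wordProd_append _ _).symm
        _ = π ω := by rw [List.take_append_drop]

theorem del_aux (n : ℕ) : ∀ ω : List B, ω.length ≤ n →
    ∃ η, η <+ ω ∧ cs.IsReduced η ∧ π η = π ω := by
  induction n with
  | zero =>
      intro ω hω
      have : ω = [] := List.length_eq_zero_iff.mp (by omega)
      subst this
      exact ⟨[], List.Sublist.refl _, isReduced_nil cs, rfl⟩
  | succ n ih =>
      intro ω hω
      by_cases hred : cs.IsReduced ω
      · exact ⟨ω, List.Sublist.refl ω, hred, rfl⟩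
      · obtain ⟨ω', hsub, hlt, hπ⟩ := del_one cs hred
        obtain ⟨η, hsub', hred', hπ'⟩ := ih ω' (by omega)
        exact ⟨η, hsub'.trans hsub, hred', by rw [hπ', hπ]⟩

theorem del (ω : List B) : ∃ η, η <+ ω ∧ cs.IsReduced η ∧ π η = π ω :=
  del_aux cs ω.length ω le_rfl

/-! ### The chain (Bruhat) order -/

/-- Bruhat order via chains of reflections on the left. -/
def Chain (x y : W) : Prop :=
  Relation.ReflTransGen (fun a b => ∃ t, cs.IsReflection t ∧ b = t * a ∧ ℓ a < ℓ b) x y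

theorem chain_refl (x : W) : Chain cs x x := Relation.ReflTransGen.refl

theorem chain_trans {x y z : W} (h1 : Chain cs x y) (h2 : Chain cs y z) : Chain cs x z :=
  Relation.ReflTransGen.trans h1 h2

theorem chain_step {x t : W} (ht : cs.IsReflection t) (h : ℓ x < ℓ (t * x)) :
    Chain cs x (t * x) :=
  Relation.ReflTransGen.single ⟨t, ht, rfl, h⟩

theorem chain_step_simple {x : W} (i : B) (h : ℓ x < ℓ (σ i * x)) :
    Chain cs x (σ i * x) :=
  chain_step cs (cs.isReflection_simple i) h

theorem chain_length_le {x y : W} (h : Chain cs x y) : ℓ x ≤ ℓ y := by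
  induction h with
  | refl => exact le_refl _
  | tail _ hstep ih =>
      obtain ⟨t, _, rfl, hlt⟩ := hstep
      omega

theorem chain_eq_of_length_ge {x y : W} (h : Chain cs x y) (hl : ℓ y ≤ ℓ x) : x = y := by
  rcases Relation.ReflTransGen.cases_tail h with heq | ⟨c, hxc, t, _, rfl, hlt⟩
  · exact heq.symm
  · have := chain_length_le cs hxc
    omega

theorem chain_antisymm {x y : W} (h1 : Chain cs x y) (h2 : Chain cs y x) : x = y :=
  chain_eq_of_length_ge cs h1 (chain_length_le cs h2)

/-- Direction 1: anything below `u` in the chain order is a reduced subword of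
any reduced word for `u`. -/
theorem chain_subword {x u : W} (h : Chain cs x u) :
    ∀ ω, cs.IsReduced ω → π ω = u → ∃ η, η <+ ω ∧ cs.IsReduced η ∧ π η = x := by
  induction h with
  | refl => exact fun ω hred hπ => ⟨ω, List.Sublist.refl ω, hred, hπ⟩
  | @tail b c hxb hstep ih =>
      intro ω hred hπ
      obtain ⟨t, ht, rfl, hlt⟩ := hstep
      have hbt : ℓ (t * π ω) < ℓ (π ω) := by
        rw [hπ]
        have hb : t * (t * b) = b := by
          rw [← mul_assoc, ht.mul_self, one_mul]
        rw [hb]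
        exact hlt
      obtain ⟨j, hj, hjer⟩ := exchange_left cs ht hbt
      obtain ⟨η', hsub', hred', hπ'⟩ := del cs (ω.eraseIdx j)
      have hπb : π η' = b := by
        rw [hπ', ← hjer, hπ, ← mul_assoc, ht.mul_self, one_mul]
      obtain ⟨η, hsub, hredη, hπη⟩ := ih η' hred' hπb
      exact ⟨η, (hsub.trans hsub').trans (List.eraseIdx_sublist ω j), hredη, hπη⟩

/-! ### The grand induction: subword ⟹ chain, and the lifting properties -/

def Pone (n : ℕ) : Prop := ∀ u : W, ℓ u = n → ∀ ω, cs.IsReduced ω → π ω = u →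
    ∀ η, η <+ ω → Chain cs (π η) u

def Ptwo (n : ℕ) : Prop := ∀ u x : W, ∀ i : B, ℓ u = n → Chain cs x u →
    ℓ u < ℓ (σ i * u) → Chain cs (σ i * x) (σ i * u)

def Pthree (n : ℕ) : Prop := ∀ u x : W, ∀ i : B, ℓ u = n → Chain cs x u →
    ℓ (σ i * u) < ℓ u → ℓ x < ℓ (σ i * x) → Chain cs x (σ i * u)

theorem grand (n : ℕ) : Pone cs n ∧ Ptwo cs n ∧ Pthree cs n := by
  induction n using Nat.strong_induction_on with
  | _ n ih =>
    have hP1 : Pone cs n := by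
      intro u hu ω hred hπ η hsub
      obtain ⟨η', hsub', hred', hπ'⟩ := del cs η
      rw [← hπ']
      replace hsub : η' <+ ω := hsub'.trans hsub
      clear hsub' hπ' hred' η
      rcases n with _ | m
      · have hω : ω = [] := by
          apply List.length_eq_zero_iff.mp
          have h1 := hred
          unfold CoxeterSystem.IsReduced at h1
          rw [hπ, hu] at h1
          omega
        subst hω
        have hη : η' = [] := List.sublist_nil.mp hsub
        subst hη
        rw [← hπ]
        exact chain_refl cs _
      · rcases ω with _ | ⟨i, ω₁⟩
        · exfalso
          have h1 := hred
          unfold CoxeterSystem.IsReduced at h1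
          rw [hπ, hu] at h1
          simp at h1
        · have hω₁red : cs.IsReduced ω₁ := by
            have := hred.drop 1
            simpa using this
          have hlen : ω₁.length = m := by
            have h1 := hred
            unfold CoxeterSystem.IsReduced at h1
            rw [hπ, hu] at h1
            simp at h1
            omega
          have hu₁ : ℓ (π ω₁) = m := by rw [← hlen]; exact hω₁red
          have hcons : u = σ i * π ω₁ := by rw [← hπ, cs.wordProd_cons]
          have hlt : ℓ (π ω₁) < ℓ (σ i * π ω₁) := by
            rw [← hcons, hu₁, hu]
            omega
          rcases List.sublist_cons_iff.mp hsub with hcase | ⟨η₁, rfl, hη₁⟩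
          · have hchain : Chain cs (π η') (π ω₁) :=
              (ih m (by omega)).1 (π ω₁) hu₁ ω₁ hω₁red rfl η' hcase
            have hstep : Chain cs (π ω₁) (σ i * π ω₁) := chain_step_simple cs i hlt
            rw [hcons]
            exact chain_trans cs hchain hstep
          · have hchain : Chain cs (π η₁) (π ω₁) :=
              (ih m (by omega)).1 (π ω₁) hu₁ ω₁ hω₁red rfl η₁ hη₁
            have h2 : Chain cs (σ i * π η₁) (σ i * π ω₁) :=
              (ih m (by omega)).2.1 (π ω₁) (π η₁) i hu₁ hchain hlt
            rw [hcons, cs.wordProd_cons]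
            exact h2
    have hP2 : Ptwo cs n := by
      intro u x i hu hchain hlt
      by_cases hx : ℓ (σ i * x) < ℓ x
      · -- σ i x < x ≤ u < σ i u
        have h1 : Chain cs (σ i * x) x := by
          have := chain_step_simple cs i (x := σ i * x)
            (by rw [cs.simple_mul_simple_cancel_left]; exact hx)
          rwa [cs.simple_mul_simple_cancel_left] at this
        have h2 : Chain cs u (σ i * u) := chain_step_simple cs i hlt
        exact chain_trans cs (chain_trans cs h1 hchain) h2
      · have hx' : ℓ x < ℓ (σ i * x) := by
          have := cs.length_simple_mul_ne x i
          omega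
        rcases Relation.ReflTransGen.cases_tail hchain with heq | ⟨y, hxy, t, ht, hyu, hlty⟩
        · rw [heq]
          exact chain_refl cs _
        · subst hyu
          by_cases hy : ℓ y < ℓ (σ i * y)
          · have h1 : Chain cs (σ i * x) (σ i * y) :=
              (ih (ℓ y) (by omega)).2.1 y x i rfl hxy hy
            have h2 : Chain cs (σ i * y) (σ i * (t * y)) := by
              have hconj : cs.IsReflection (σ i * t * σ i) := by
                have := ht.conj (σ i)
                rwa [cs.inv_simple] at this
              have hmul : (σ i * t * σ i) * (σ i * y) = σ i * (t * y) := by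
                simp [mul_assoc]
              have hlen2 : ℓ (σ i * y) < ℓ ((σ i * t * σ i) * (σ i * y)) := by
                rw [hmul]
                have e1 : ℓ (σ i * y) ≤ ℓ y + 1 := by
                  have := cs.length_simple_mul y i
                  omega
                omega
              have := chain_step cs hconj hlen2
              rwa [hmul] at this
            exact chain_trans cs h1 h2
          · have hy' : ℓ (σ i * y) < ℓ y := by
              have := cs.length_simple_mul_ne y i
              omega
            -- x ≤ σ i y (P3), then σ i x ≤ σ i (σ i y) = y (P2 at lower level)
            have h1 : Chain cs x (σ i * y) :=
              (ih (ℓ y) (by omega)).2.2 y x i rfl hxy hy' hx'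
            have h2 : Chain cs (σ i * x) (σ i * (σ i * y)) := by
              apply (ih (ℓ (σ i * y)) (by omega)).2.1 (σ i * y) x i rfl h1
              rw [cs.simple_mul_simple_cancel_left]
              exact hy'
            rw [cs.simple_mul_simple_cancel_left] at h2
            -- now y < t y = u < σ i u
            have h3 : Chain cs y (t * y) := chain_step cs ht hlty
            have h4 : Chain cs (t * y) (σ i * (t * y)) := chain_step_simple cs i hlt
            exact chain_trans cs (chain_trans cs h2 h3) h4
    have hP3 : Pthree cs n := by
      intro u x i hu hchain hlt hx
      rcases Relation.ReflTransGen.cases_tail hchain with heq | ⟨y, hxy, t, ht, hyu, hlty⟩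
      · exfalso
        subst heq
        omega
      · subst hyu
        by_cases hy : ℓ (σ i * y) < ℓ y
        · have h1 : Chain cs x (σ i * y) :=
            (ih (ℓ y) (by omega)).2.2 y x i rfl hxy hy hx
          have h2 : Chain cs (σ i * y) (σ i * (t * y)) := by
            have hconj : cs.IsReflection (σ i * t * σ i) := by
              have := ht.conj (σ i)
              rwa [cs.inv_simple] at this
            have hmul : (σ i * t * σ i) * (σ i * y) = σ i * (t * y) := by
              simp [mul_assoc]
            have hlen2 : ℓ (σ i * y) < ℓ ((σ i * t * σ i) * (σ i * y)) := by
              rw [hmul]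
              have e1 : ℓ y ≤ ℓ (σ i * y) + 1 := by
                have := cs.length_simple_mul y i
                omega
              have e2 : ℓ (t * y) ≤ ℓ (σ i * (t * y)) + 1 := by
                have := cs.length_simple_mul (t * y) i
                omega
              omega
            have := chain_step cs hconj hlen2
            rwa [hmul] at this
          exact chain_trans cs h1 h2
        · have hy' : ℓ y < ℓ (σ i * y) := by
            have := cs.length_simple_mul_ne y i
            omega
          -- strong exchange branch
          obtain ⟨β, hβred, hβπ⟩ := cs.exists_reduced_word' (σ i * (t * y))
          have hππ : π (i :: β) = t * y := by
            rw [cs.wordProd_cons, ← hβπ, cs.simple_mul_simple_cancel_left]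
          have hlinv : ℓ (t * π (i :: β)) < ℓ (π (i :: β)) := by
            rw [hππ, ← mul_assoc, ht.mul_self, one_mul]
            exact hlty
          obtain ⟨j, hj, hjer⟩ := exchange_left cs ht hlinv
          rw [hππ, ← mul_assoc, ht.mul_self, one_mul] at hjer
          -- hjer : y = π ((i :: β).eraseIdx j)
          rcases j with _ | j₁
          · -- y = π β = σ i * u
            rw [show (i :: β).eraseIdx 0 = β from rfl] at hjer
            have heq : σ i * (t * y) = y := hβπ.trans hjer.symm
            rw [heq]
            exact hxy
          · rw [List.eraseIdx_cons_succ, cs.wordProd_cons] at hjer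
            -- y = σ i * π (β.eraseIdx j₁), so σ i * y = π (β.eraseIdx j₁)
            have hsy : σ i * y = π (β.eraseIdx j₁) := by
              rw [hjer, cs.simple_mul_simple_cancel_left]
            have hβlen : ℓ (σ i * (t * y)) = n - 1 := by
              have := cs.length_simple_mul (t * y) i
              omega
            have h1 : Chain cs (π (β.eraseIdx j₁)) (σ i * (t * y)) :=
              (ih (n - 1) (by omega)).1 (σ i * (t * y)) hβlen β hβred hβπ.symm
                (β.eraseIdx j₁) (List.eraseIdx_sublist β j₁)
            rw [← hsy] at h1
            have h2 : Chain cs y (σ i * y) := chain_step_simple cs i hy'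
            exact chain_trans cs (chain_trans cs hxy h2) h1
    exact ⟨hP1, hP2, hP3⟩

theorem subword_chain {u : W} {ω : List B} (hred : cs.IsReduced ω) (hπ : π ω = u)
    {η : List B} (hsub : η <+ ω) : Chain cs (π η) u :=
  (grand cs (ℓ u)).1 u rfl ω hred hπ η hsub

theorem chain_simple_mul {u x : W} (i : B) (h : Chain cs x u) (hlt : ℓ u < ℓ (σ i * u)) :
    Chain cs (σ i * x) (σ i * u) :=
  (grand cs (ℓ u)).2.1 u x i rfl h hlt

theorem chain_lift {u x : W} (i : B) (h : Chain cs x u) (hlt : ℓ (σ i * u) < ℓ u)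
    (hx : ℓ x < ℓ (σ i * x)) : Chain cs x (σ i * u) :=
  (grand cs (ℓ u)).2.2 u x i rfl h hlt hx
/-! ### Equivalence with the subword definition -/

theorem bruhatLE_iff_chain (x u : W) : BruhatLE cs x u ↔ Chain cs x u := by
  constructor
  · rintro ⟨ω, hred, hu, η, hsub, hx⟩
    rw [hx, hu]
    exact subword_chain cs hred rfl hsub
  · intro h
    obtain ⟨ω, hred, hu⟩ := cs.exists_reduced_word' u
    obtain ⟨η, hsub, hredη, hπη⟩ := chain_subword cs h ω hred hu.symm
    exact ⟨ω, hred, hu, η, hsub, hπη.symm⟩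

/-! ### The key lemma -/

theorem key (n : ℕ) : ∀ u w : W, ℓ u = n →
    ∃ y : W, (∃ v : W, Chain cs v u ∧ y = v * w) ∧
      (∀ z : W, (∃ v : W, Chain cs v u ∧ z = v * w) → Chain cs y z) ∧
      ℓ y + ℓ (y * w⁻¹) = ℓ w := by
  induction n using Nat.strong_induction_on with
  | _ n ih =>
    intro u w hu
    rcases n with _ | m
    · have hu1 : u = 1 := cs.length_eq_zero_iff.mp hu
      subst hu1
      refine ⟨w, ⟨1, chain_refl cs 1, (one_mul w).symm⟩, ?_, ?_⟩
      · rintro z ⟨v, hv, rfl⟩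
        have hv1 : v = 1 :=
          chain_eq_of_length_ge cs hv (by rw [cs.length_one]; exact Nat.zero_le _)
        rw [hv1, one_mul]
        exact chain_refl cs w
      · rw [mul_inv_cancel, cs.length_one]
        omega
    · obtain ⟨ω, hred, hπ⟩ := cs.exists_reduced_word' u
      rcases ω with _ | ⟨i, ω₁⟩
      · exfalso
        have h1 := hred
        unfold CoxeterSystem.IsReduced at h1
        rw [← hπ, hu] at h1
        simp at h1
      · have hω₁red : cs.IsReduced ω₁ := by
          have := hred.drop 1
          simpa using this
        have hlenω : ω₁.length = m := by
          have h1 := hred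
          unfold CoxeterSystem.IsReduced at h1
          rw [← hπ, hu] at h1
          simp at h1
          omega
        have hu₁ : ℓ (π ω₁) = m := by rw [← hlenω]; exact hω₁red
        set u₁ := π ω₁ with hu₁def
        have hcons : u = σ i * u₁ := by rw [hπ, cs.wordProd_cons]
        have hlt : ℓ u₁ < ℓ (σ i * u₁) := by
          rw [← hcons, hu₁, hu]
          omega
        obtain ⟨y₁, ⟨v₁, hv₁, hy₁⟩, hmin₁, hlen₁⟩ := ih m (by omega) u₁ w hu₁
        have hup : ∀ v, Chain cs v u₁ → Chain cs v u := fun v hv => by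
          rw [hcons]
          exact chain_trans cs hv (chain_step_simple cs i hlt)
        have hup2 : ∀ v, Chain cs v u₁ → Chain cs (σ i * v) u := fun v hv => by
          rw [hcons]
          exact chain_simple_mul cs i hv hlt
        have hsu : ℓ (σ i * u) < ℓ u := by
          rw [hcons, cs.simple_mul_simple_cancel_left, ← hcons]
          omega
        have hdecomp : ∀ v, Chain cs v u → Chain cs v u₁ ∨ Chain cs (σ i * v) u₁ := by
          intro v hv
          by_cases hvx : ℓ v < ℓ (σ i * v)
          · left
            have := chain_lift cs i hv hsu hvx
            rwa [hcons, cs.simple_mul_simple_cancel_left] at this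
          · right
            have hvx' : ℓ (σ i * v) < ℓ v := by
              have := cs.length_simple_mul_ne v i
              omega
            have hstep : Chain cs (σ i * v) v := by
              have := chain_step_simple cs i (x := σ i * v)
                (by rw [cs.simple_mul_simple_cancel_left]; exact hvx')
              rwa [cs.simple_mul_simple_cancel_left] at this
            have hch : Chain cs (σ i * v) u := chain_trans cs hstep hv
            have := chain_lift cs i hch hsu
              (by rw [cs.simple_mul_simple_cancel_left]; exact hvx')
            rwa [hcons, cs.simple_mul_simple_cancel_left] at this
        have hzflip : ∀ v : W, v * w = σ i * ((σ i * v) * w) := by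
          intro v
          rw [← mul_assoc, cs.simple_mul_simple_cancel_left]
        by_cases hy : ℓ (σ i * y₁) < ℓ y₁
        · -- the minimum is σ i * y₁
          have hstepy : Chain cs (σ i * y₁) y₁ := by
            have := chain_step_simple cs i (x := σ i * y₁)
              (by rw [cs.simple_mul_simple_cancel_left]; exact hy)
            rwa [cs.simple_mul_simple_cancel_left] at this
          have hx' : ℓ (σ i * y₁) < ℓ (σ i * (σ i * y₁)) := by
            rw [cs.simple_mul_simple_cancel_left]
            exact hy
          refine ⟨σ i * y₁, ⟨σ i * v₁, hup2 v₁ hv₁, by rw [hy₁, mul_assoc]⟩, ?_, ?_⟩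
          · rintro z ⟨v, hv, rfl⟩
            rcases hdecomp v hv with hv1 | hv2
            · exact chain_trans cs hstepy (hmin₁ _ ⟨v, hv1, rfl⟩)
            · have h1 : Chain cs y₁ ((σ i * v) * w) := hmin₁ _ ⟨σ i * v, hv2, rfl⟩
              by_cases hz₁ : ℓ ((σ i * v) * w) < ℓ (σ i * ((σ i * v) * w))
              · rw [hzflip v]
                exact chain_trans cs (chain_trans cs hstepy h1)
                  (chain_step_simple cs i hz₁)
              · have hz₁' : ℓ (σ i * ((σ i * v) * w)) < ℓ ((σ i * v) * w) := by
                  have := cs.length_simple_mul_ne ((σ i * v) * w) i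
                  omega
                have hch : Chain cs (σ i * y₁) ((σ i * v) * w) :=
                  chain_trans cs hstepy h1
                rw [hzflip v]
                exact chain_lift cs i hch hz₁' hx'
          · -- length identity
            have hd1 : ℓ (σ i * y₁) + 1 = ℓ y₁ := by
              have := cs.length_simple_mul y₁ i
              omega
            have hyw : y₁ * w⁻¹ = v₁ := by rw [hy₁, mul_inv_cancel_right]
            rw [hyw] at hlen₁
            have heqv : (σ i * y₁) * w⁻¹ = σ i * v₁ := by
              rw [hy₁]; group
            have hsv : ℓ (σ i * v₁) = ℓ v₁ + 1 := by
              by_contra hcon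
              have hdown : ℓ (σ i * v₁) + 1 = ℓ v₁ := by
                have := cs.length_simple_mul v₁ i
                omega
              have htri := cs.length_mul_ge_length_sub_length' (σ i * v₁) w
              have heq2 : (σ i * v₁) * w = σ i * y₁ := by rw [hy₁]; group
              rw [heq2] at htri
              omega
            rw [heqv, hsv]
            omega
        · -- the minimum is y₁
          have hy' : ℓ y₁ < ℓ (σ i * y₁) := by
            have := cs.length_simple_mul_ne y₁ i
            omega
          refine ⟨y₁, ⟨v₁, hup v₁ hv₁, hy₁⟩, ?_, hlen₁⟩
          rintro z ⟨v, hv, rfl⟩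
          rcases hdecomp v hv with hv1 | hv2
          · exact hmin₁ _ ⟨v, hv1, rfl⟩
          · have h1 : Chain cs y₁ ((σ i * v) * w) := hmin₁ _ ⟨σ i * v, hv2, rfl⟩
            by_cases hz₁ : ℓ ((σ i * v) * w) < ℓ (σ i * ((σ i * v) * w))
            · rw [hzflip v]
              exact chain_trans cs h1 (chain_step_simple cs i hz₁)
            · have hz₁' : ℓ (σ i * ((σ i * v) * w)) < ℓ ((σ i * v) * w) := by
                have := cs.length_simple_mul_ne ((σ i * v) * w) i
                omega
              rw [hzflip v]
              exact chain_lift cs i h1 hz₁' hy'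

end

end BruhatAux

/-- Lemma 1.4(1): the set `{v w ; v ≤ u}` contains a unique minimal element `y` for the
Bruhat order, and `ℓ(y) = ℓ(w) - ℓ(y w⁻¹)`. -/
theorem exists_unique_min_of_bruhat_interval_mul
    (cs : CoxeterSystem M W) (u w : W) :
    ∃ y : W, (∃ v : W, BruhatLE cs v u ∧ y = v * w) ∧
      (∀ z : W, (∃ v : W, BruhatLE cs v u ∧ z = v * w) → BruhatLE cs y z) ∧
      (∀ y' : W, (∃ v : W, BruhatLE cs v u ∧ y' = v * w) →
        (∀ z : W, (∃ v : W, BruhatLE cs v u ∧ z = v * w) → BruhatLE cs y' z) → y' = y) ∧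
      cs.length y + cs.length (y * w⁻¹) = cs.length w := by
  obtain ⟨y, hmem, hmin, hlen⟩ := BruhatAux.key cs (cs.length u) u w rfl
  obtain ⟨v, hv, hy⟩ := hmem
  refine ⟨y, ⟨v, (BruhatAux.bruhatLE_iff_chain cs v u).mpr hv, hy⟩, ?_, ?_, hlen⟩
  · rintro z ⟨v', hv', hz⟩
    exact (BruhatAux.bruhatLE_iff_chain cs y z).mpr
      (hmin z ⟨v', (BruhatAux.bruhatLE_iff_chain cs v' u).mp hv', hz⟩)
  · rintro y' ⟨v', hv', hy'⟩ hmin'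
    have h1 : BruhatLE cs y' y :=
      hmin' y ⟨v, (BruhatAux.bruhatLE_iff_chain cs v u).mpr hv, hy⟩
    have h2 : BruhatAux.Chain cs y y' :=
      hmin y' ⟨v', (BruhatAux.bruhatLE_iff_chain cs v' u).mp hv', hy'⟩
    exact BruhatAux.chain_antisymm cs ((BruhatAux.bruhatLE_iff_chain cs y' y).mp h1) h2
end

section
/- Let W₁, W₂ be Coxeter groups, c = (J₁, J₂, δ) and c' = (J'₁, J'₂, δ') admissible triples for W₁ × W₂, with associated subgroups W_c = {(w, δ(w)) : w ∈ W_{J₁}} and W_{c'} = {(w, δ'(w)) : w ∈ W_{J'₁}}. Then each double coset in W_{c'} \ (W₁ × W₂) / W_c contains at most one element (w₁, w₂) with w₁ ∈ ^{J'₁}W₁ and w₂ ∈ W₂^{J₂}. -/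
open CoxeterSystem

variable {B₁ W₁ B₂ W₂ : Type*} [Group W₁] [Group W₂]
  {M₁ : CoxeterMatrix B₁} {M₂ : CoxeterMatrix B₂}

/-- The standard parabolic subgroup `W_J`. -/
def StdParabolic {B W : Type*} [Group W] {M : CoxeterMatrix B}
    (cs : CoxeterSystem M W) (J : Set B) : Subgroup W :=
  Subgroup.closure (cs.simple '' J)

section Aux

open List


namespace CoxAux

attribute [local instance] Classical.propDecidable

noncomputable section

variable {B W : Type*} [Group W] {M : CoxeterMatrix B} (cs : CoxeterSystem M W)

local prefix:100 "s" => cs.simple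
local prefix:100 "π" => cs.wordProd
local prefix:100 "ℓ" => cs.length
local prefix:100 "ris" => cs.rightInvSeq
local prefix:100 "lis" => cs.leftInvSeq

lemma zmod2_cases (x : ZMod 2) : x = 0 ∨ x = 1 := by
  have h : ∀ y : ZMod 2, y = 0 ∨ y = 1 := by decide
  exact h x

/-- The basic involution underlying the parity representation. -/
def etaFun (i : B) : W × ZMod 2 → W × ZMod 2 :=
  fun p => (s i * p.1 * s i, p.2 + if p.1 = s i then 1 else 0)

lemma etaFun_involutive (i : B) : Function.Involutive (etaFun cs i) := by
  intro p
  unfold etaFun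
  have h1 : s i * (s i * p.1 * s i) * s i = p.1 := by
    rw [← mul_assoc, ← mul_assoc, cs.simple_mul_simple_self, one_mul, mul_assoc,
      cs.simple_mul_simple_self, mul_one]
  have h2 : (s i * p.1 * s i = s i) ↔ (p.1 = s i) := by
    constructor
    · intro h
      have := congrArg (fun z => s i * z * s i) h
      simpa [← mul_assoc, cs.simple_mul_simple_self, mul_assoc] using this
    · rintro h; rw [h]; rw [cs.simple_mul_simple_self, one_mul]
  ext
  · exact h1
  · simp only [h2]
    rcases em (p.1 = s i) with h | h
    · simp only [h, if_pos]
      rw [add_assoc]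
      show p.2 + (1 + 1) = p.2
      norm_num
      decide
    · simp [h]

/-- The parity involution as a permutation. -/
def eta (i : B) : Equiv.Perm (W × ZMod 2) := (etaFun_involutive cs i).toPerm

lemma eta_apply (i : B) (t : W) (ε : ZMod 2) :
    eta cs i (t, ε) = (s i * t * s i, ε + if t = s i then 1 else 0) := rfl





section Liftable

variable {cs}

lemma conj_pow_eq {σ a : W} (hσ : σ * σ = 1) (hc : σ * a * σ = a⁻¹) (k : ℕ) :
    σ * a ^ k * σ = (a ^ k)⁻¹ := by
  induction k with
  | zero => simpa using hσ
  | succ n ih =>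
    have h3 : (σ * a ^ n * σ) * (σ * a * σ) = σ * a ^ n * (σ * σ) * a * σ := by
      simp [mul_assoc]
    have : σ * a ^ (n + 1) * σ = (σ * a ^ n * σ) * (σ * a * σ) := by
      rw [pow_succ, h3, hσ, mul_one]; simp [mul_assoc]
    rw [this, ih, hc, ← mul_inv_rev, ← pow_succ']

lemma sigma_pow_comm {σ a : W} (hσ : σ * σ = 1) (hc : σ * a * σ = a⁻¹) (k : ℕ) :
    σ * (a ^ k)⁻¹ = a ^ k * σ := by
  have h := conj_pow_eq hσ hc k
  calc σ * (a ^ k)⁻¹ = σ * (σ * a ^ k * σ) := by rw [h]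
  _ = (σ * σ) * a ^ k * σ := by group
  _ = a ^ k * σ := by rw [hσ]; group

end Liftable

variable {cs} in
lemma sum_range_shift_one {N : Type*} [AddCancelCommMonoid N] (h : ℕ → N) (m : ℕ)
    (hper : h m = h 0) :
    ∑ r ∈ Finset.range m, h (r + 1) = ∑ r ∈ Finset.range m, h r := by
  have h1 : ∑ r ∈ Finset.range (m + 1), h r
      = ∑ r ∈ Finset.range m, h (r + 1) + h 0 := Finset.sum_range_succ' h m
  have h2 : ∑ r ∈ Finset.range (m + 1), h r
      = ∑ r ∈ Finset.range m, h r + h m := Finset.sum_range_succ h m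
  rw [hper] at h2
  exact add_right_cancel (h1.symm.trans h2)

lemma sum_range_shift {N : Type*} [AddCancelCommMonoid N] (h : ℕ → N) (m k : ℕ)
    (hper : ∀ r, h (r + m) = h r) :
    ∑ r ∈ Finset.range m, h (r + k) = ∑ r ∈ Finset.range m, h r := by
  induction k with
  | zero => simp
  | succ n ih =>
    have step : ∑ r ∈ Finset.range m, (fun x => h (x + n)) (r + 1)
        = ∑ r ∈ Finset.range m, h (r + n) := by
      apply sum_range_shift_one (fun x => h (x + n)) m
      show h (m + n) = h (0 + n)
      rw [Nat.add_comm m n, hper n, Nat.zero_add]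
    calc ∑ r ∈ Finset.range m, h (r + (n + 1))
        = ∑ r ∈ Finset.range m, (fun x => h (x + n)) (r + 1) := by
          apply Finset.sum_congr rfl; intro r _; simp [Nat.add_assoc, Nat.add_comm 1 n]
      _ = ∑ r ∈ Finset.range m, h (r + n) := step
      _ = ∑ r ∈ Finset.range m, h r := ih

section LiftMain

variable {cs}

lemma conj_eq_iff (g u v : W) : g * u * g⁻¹ = v ↔ u = g⁻¹ * v * g := by
  constructor
  · intro h; rw [← h]; group
  · intro h; rw [h]; group

variable (cs) in
lemma eta_mul_apply (i j : B) (t : W) (ε : ZMod 2) :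
    (eta cs i * eta cs j) (t, ε)
      = ((s i * s j) * t * (s i * s j)⁻¹,
          ε + ((if t = s j then 1 else 0) + (if t = s j * s i * s j then 1 else 0))) := by
  have h : (eta cs i * eta cs j) (t, ε) = eta cs i (eta cs j (t, ε)) := rfl
  rw [h, eta_apply, eta_apply]
  have hinv : (s i * s j)⁻¹ = s j * s i := by
    rw [mul_inv_rev, cs.inv_simple, cs.inv_simple]
  have hcond : (s j * t * s j = s i) ↔ (t = s j * s i * s j) := by
    constructor
    · intro h'
      have := congrArg (fun z => s j * z * s j) h'
      simpa [← mul_assoc, cs.simple_mul_simple_self, mul_assoc] using this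
    · intro h'
      rw [h']
      rw [show s j * (s j * s i * s j) * s j = (s j * s j) * s i * (s j * s j) by
        simp [mul_assoc]]
      rw [cs.simple_mul_simple_self]; simp
  ext
  · show s i * (s j * t * s j) * s i = s i * s j * t * (s i * s j)⁻¹
    rw [hinv]; simp [mul_assoc]
  · show ε + (if t = s j then 1 else 0) + (if s j * t * s j = s i then 1 else 0)
      = ε + ((if t = s j then 1 else 0) + (if t = s j * s i * s j then 1 else 0))
    rw [if_congr hcond rfl rfl, add_assoc]

variable (cs) in
lemma eta_mul_pow_apply (i j : B) (k : ℕ) (t : W) (ε : ZMod 2) :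
    ((eta cs i * eta cs j) ^ k) (t, ε)
      = ((s i * s j) ^ k * t * ((s i * s j) ^ k)⁻¹,
          ε + ∑ r ∈ Finset.range k,
            ((if (s i * s j) ^ r * t * ((s i * s j) ^ r)⁻¹ = s j then 1 else 0)
              + (if (s i * s j) ^ r * t * ((s i * s j) ^ r)⁻¹ = s j * s i * s j then (1 : ZMod 2)
                  else 0))) := by
  induction k with
  | zero => simp
  | succ n ih =>
    have hp : ((eta cs i * eta cs j) ^ (n + 1)) (t, ε)
        = (eta cs i * eta cs j) (((eta cs i * eta cs j) ^ n) (t, ε)) := by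
      rw [pow_succ']; rfl
    rw [hp, ih, eta_mul_apply]
    set a := s i * s j with ha
    ext
    · show a * (a ^ n * t * (a ^ n)⁻¹) * a⁻¹ = a ^ (n + 1) * t * (a ^ (n + 1))⁻¹
      rw [pow_succ']
      simp [mul_assoc]
    · show (ε + ∑ r ∈ Finset.range n, _) + _ = ε + ∑ r ∈ Finset.range (n + 1), _
      rw [Finset.sum_range_succ, add_assoc]

lemma eta_liftable : M.IsLiftable (fun i => eta cs i) := by
  intro i j
  set m := M.M i j with hm
  rcases Nat.eq_zero_or_pos m with h0 | hpos
  · rw [h0, pow_zero]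
  · apply Equiv.ext
    rintro ⟨t, ε⟩
    have ham : (s i * s j) ^ m = 1 := cs.simple_mul_simple_pow i j
    rw [eta_mul_pow_apply, ham]
    set a := s i * s j with ha
    have hσ : s i * s i = 1 := cs.simple_mul_simple_self i
    have hτ : s j * s j = 1 := cs.simple_mul_simple_self j
    have hainv : a⁻¹ = s j * s i := by
      rw [ha, mul_inv_rev, cs.inv_simple, cs.inv_simple]
    have hcσ : s i * a * s i = a⁻¹ := by
      rw [ha, hainv, show s i * (s i * s j) * s i = (s i * s i) * (s j * s i) by simp [mul_assoc],
        hσ, one_mul]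
    have hcτ : s j * a * s j = a⁻¹ := by
      rw [ha, hainv, show s j * (s i * s j) * s j = s j * s i * (s j * s j) by simp [mul_assoc],
        hτ, mul_one]
    -- rewrite the conditions
    set F : ℕ → W := fun r => (a ^ r)⁻¹ * s j * a ^ r with hF
    set G : ℕ → W := fun r => (a ^ r)⁻¹ * s i * a ^ r with hG
    have hFper : ∀ r, F (r + m) = F r := by
      intro r; simp only [hF, pow_add, ham, mul_one]
    have hGper : ∀ r, G (r + m) = G r := by
      intro r; simp only [hG, pow_add, ham, mul_one]
    have hrw : ∀ r : ℕ,
        ((if a ^ r * t * (a ^ r)⁻¹ = s j then (1:ZMod 2) else 0)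
          + (if a ^ r * t * (a ^ r)⁻¹ = s j * s i * s j then (1:ZMod 2) else 0))
        = (if t = F r then 1 else 0) + (if t = G (r + 1) then 1 else 0) := by
      intro r
      congr 1
      · exact if_congr (conj_eq_iff _ _ _) rfl rfl
      · refine if_congr ?_ rfl rfl
        rw [conj_eq_iff]
        have h1 : s j * s i * s j = a⁻¹ * s i * a := by
          rw [hainv, ha, show s j * s i * s i * (s i * s j) = s j * (s i * s i) * s i * s j by
            simp [mul_assoc], hσ]
          simp [mul_assoc]
        have h2 : (a ^ r)⁻¹ * (a⁻¹ * s i * a) * a ^ r = G (r + 1) := by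
          show _ = (a ^ (r + 1))⁻¹ * s i * a ^ (r + 1)
          rw [pow_succ' a r]
          simp [mul_assoc]
        rw [h1, h2]
    rw [Finset.sum_congr rfl (fun r _ => hrw r)]
    rw [Finset.sum_add_distrib]
    have hshift : ∑ r ∈ Finset.range m, (if t = G (r + 1) then (1:ZMod 2) else 0)
        = ∑ r ∈ Finset.range m, (if t = G r then (1:ZMod 2) else 0) := by
      apply sum_range_shift_one (fun r => if t = G r then (1:ZMod 2) else 0) m
      have : G m = G 0 := by
        have := hGper 0
        simpa using this
      simp [this]
    rw [hshift]
    have key : ∀ x : W, x * x = 1 → x * a * x = a⁻¹ → ∀ n : ℕ,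
        a ^ n * a ^ n = 1 → (a ^ n)⁻¹ * x * a ^ n = x := by
      intro x hx hcx n h2n
      have h1 : x * a ^ n * x = (a ^ n)⁻¹ := conj_pow_eq hx hcx n
      have h2 : x * a ^ n = (a ^ n)⁻¹ * x := by
        calc x * a ^ n = (x * a ^ n * x) * x := by rw [mul_assoc, hx, mul_one]
        _ = (a ^ n)⁻¹ * x := by rw [h1]
      calc (a ^ n)⁻¹ * x * a ^ n = (a ^ n)⁻¹ * (x * a ^ n) := by rw [mul_assoc]
      _ = ((a ^ n) * (a ^ n))⁻¹ * x := by rw [h2, mul_inv_rev]; simp [mul_assoc]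
      _ = x := by rw [h2n]; simp
    have hpowswap : ∀ r n : ℕ, a ^ (r + n) = a ^ n * a ^ r := by
      intro r n; rw [Nat.add_comm, pow_add]
    rcases Nat.even_or_odd m with ⟨k, hk⟩ | ⟨k, hk⟩
    · -- even case
      have ha2k : a ^ k * a ^ k = 1 := by rw [← pow_add, ← hk, ham]
      have hFk : ∀ r, F (r + k) = F r := by
        intro r
        show (a ^ (r + k))⁻¹ * s j * a ^ (r + k) = (a ^ r)⁻¹ * s j * a ^ r
        rw [hpowswap r k, mul_inv_rev]
        rw [show (a ^ r)⁻¹ * (a ^ k)⁻¹ * s j * (a ^ k * a ^ r)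
            = (a ^ r)⁻¹ * ((a ^ k)⁻¹ * s j * a ^ k) * a ^ r by simp [mul_assoc]]
        rw [key (s j) hτ hcτ k ha2k]
      have hGk : ∀ r, G (r + k) = G r := by
        intro r
        show (a ^ (r + k))⁻¹ * s i * a ^ (r + k) = (a ^ r)⁻¹ * s i * a ^ r
        rw [hpowswap r k, mul_inv_rev]
        rw [show (a ^ r)⁻¹ * (a ^ k)⁻¹ * s i * (a ^ k * a ^ r)
            = (a ^ r)⁻¹ * ((a ^ k)⁻¹ * s i * a ^ k) * a ^ r by simp [mul_assoc]]
        rw [key (s i) hσ hcσ k ha2k]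
      have hsum : ∀ H : ℕ → W, (∀ r, H (r + k) = H r) →
          ∑ r ∈ Finset.range m, (if t = H r then (1 : ZMod 2) else 0) = 0 := by
        intro H hH
        rw [hk]
        rw [Finset.sum_range_add (fun r => if t = H r then (1 : ZMod 2) else 0) k k]
        have : ∀ r ∈ Finset.range k,
            (if t = H (k + r) then (1 : ZMod 2) else 0) = (if t = H r then 1 else 0) := by
          intro r _
          rw [Nat.add_comm k r, hH r]
        rw [Finset.sum_congr rfl this]
        exact CharTwo.add_self_eq_zero _
      rw [hsum F hFk, hsum G hGk]
      simp
    · -- odd case : m = 2 * k + 1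
      have hk' : (k + 1) + k = m := by omega
      have hak : a ^ (k + 1) = (a ^ k)⁻¹ := by
        have h := (mul_eq_one_iff_eq_inv (a := a ^ (k + 1)) (b := a ^ k)).mp
          (by rw [← pow_add, hk', ham])
        exact h
      have hcore : (a ^ k)⁻¹ * s j * a ^ k = s i := by
        have h1 : s j * a ^ k = s i * a ^ (k + 1) := by
          calc s j * a ^ k = ((s i * s i) * s j) * a ^ k := by rw [hσ, one_mul]
          _ = (s i * (s i * s j)) * a ^ k := by simp [mul_assoc]
          _ = (s i * a) * a ^ k := by rw [← ha]
          _ = s i * (a * a ^ k) := by rw [mul_assoc]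
          _ = s i * a ^ (k + 1) := by rw [← pow_succ' a k]
        have h2 : s j * a ^ k = a ^ k * s i := by
          rw [h1, hak, sigma_pow_comm hσ hcσ k]
        calc (a ^ k)⁻¹ * s j * a ^ k = (a ^ k)⁻¹ * (s j * a ^ k) := by rw [mul_assoc]
        _ = (a ^ k)⁻¹ * (a ^ k * s i) := by rw [h2]
        _ = s i := by simp [← mul_assoc]
      have hGF : ∀ r, G r = F (r + k) := by
        intro r
        show (a ^ r)⁻¹ * s i * a ^ r = (a ^ (r + k))⁻¹ * s j * a ^ (r + k)
        rw [hpowswap r k, mul_inv_rev]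
        rw [show (a ^ r)⁻¹ * (a ^ k)⁻¹ * s j * (a ^ k * a ^ r)
            = (a ^ r)⁻¹ * ((a ^ k)⁻¹ * s j * a ^ k) * a ^ r by simp [mul_assoc]]
        rw [hcore]
      have hsumG : ∑ r ∈ Finset.range m, (if t = G r then (1 : ZMod 2) else 0)
          = ∑ r ∈ Finset.range m, (if t = F r then (1 : ZMod 2) else 0) := by
        have h1 : ∀ r ∈ Finset.range m,
            (if t = G r then (1 : ZMod 2) else 0) = (if t = F (r + k) then 1 else 0) := by
          intro r _; rw [hGF r]
        rw [Finset.sum_congr rfl h1]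
        exact sum_range_shift (fun r => if t = F r then (1 : ZMod 2) else 0) m k
          (fun r => by show (if t = F (r + m) then (1 : ZMod 2) else 0) = _; rw [hFper r])
      rw [hsumG, CharTwo.add_self_eq_zero]
      simp

end LiftMain

/-- The parity representation `W →* Perm (W × ZMod 2)`. -/
def phi : W →* Equiv.Perm (W × ZMod 2) := cs.lift ⟨fun i => eta cs i, eta_liftable⟩

lemma phi_simple (i : B) : phi cs (s i) = eta cs i :=
  cs.lift_apply_simple eta_liftable i

/-- Parity of the number of times `t` occurs in the right inversion sequence. -/
def nn (w t : W) : ZMod 2 := (phi cs w (t, 0)).2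

lemma phi_wordProd (ω : List B) (t : W) (ε : ZMod 2) :
    phi cs (π ω) (t, ε) = ((π ω) * t * (π ω)⁻¹, ε + ((ris ω).count t : ZMod 2)) := by
  induction ω generalizing t ε with
  | nil => simp [CoxeterSystem.wordProd_nil]
  | cons i ω ih =>
    rw [CoxeterSystem.wordProd_cons, map_mul]
    have : (phi cs (s i) * phi cs (π ω)) (t, ε) = phi cs (s i) (phi cs (π ω) (t, ε)) := rfl
    rw [this, ih, phi_simple, eta_apply]
    have hris : cs.rightInvSeq (i :: ω) = ((π ω)⁻¹ * (s i) * (π ω)) :: cs.rightInvSeq ω := rfl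
    ext
    · show s i * (π ω * t * (π ω)⁻¹) * s i = (s i * π ω) * t * (s i * π ω)⁻¹
      rw [mul_inv_rev, cs.inv_simple]
      simp [mul_assoc]
    · show ε + ((ris ω).count t : ZMod 2)
          + (if π ω * t * (π ω)⁻¹ = s i then 1 else 0)
        = ε + (((ris (i :: ω)).count t : ZMod 2))
      rw [hris]
      have hcond : (π ω * t * (π ω)⁻¹ = s i) ↔ (((π ω)⁻¹ * (s i) * (π ω)) = t) := by
        rw [conj_eq_iff]; exact eq_comm
      rw [List.count_cons]
      push_cast
      rw [if_congr hcond rfl rfl, add_assoc]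
      congr 1
      rcases em ((π ω)⁻¹ * (s i) * (π ω) = t) with h | h
      · simp [h]
      · simp [h]

lemma nn_wordProd (ω : List B) (t : W) :
    nn cs (π ω) t = ((ris ω).count t : ZMod 2) := by
  rw [nn, phi_wordProd]
  simp

lemma phi_apply' (w t : W) (ε : ZMod 2) :
    phi cs w (t, ε) = (w * t * w⁻¹, ε + nn cs w t) := by
  obtain ⟨ω, _, rfl⟩ := cs.exists_reduced_word' w
  rw [phi_wordProd, nn_wordProd]

lemma nn_one (t : W) : nn cs 1 t = 0 := by
  rw [nn]; simp

lemma nn_mul (u v t : W) : nn cs (u * v) t = nn cs v t + nn cs u (v * t * v⁻¹) := by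
  have h : phi cs (u * v) (t, 0) = phi cs u (phi cs v (t, 0)) := by
    rw [map_mul]; rfl
  rw [nn, h, phi_apply', phi_apply']
  simp

lemma nn_inv_conj (v t : W) : nn cs v⁻¹ (v * t * v⁻¹) = nn cs v t := by
  have h := nn_mul cs v⁻¹ v t
  rw [inv_mul_cancel, nn_one] at h
  have key : ∀ x y : ZMod 2, (0 : ZMod 2) = x + y → y = x := by decide
  exact key _ _ h

lemma nn_simple_self (i : B) : nn cs (s i) (s i) = 1 := by
  have h : s i = π [i] := by simp
  rw [h, nn_wordProd]
  have : cs.rightInvSeq [i] = [s i] := by simp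
  rw [this]
  simp

lemma nn_reflection_self {t : W} (ht : cs.IsReflection t) : nn cs t t = 1 := by
  obtain ⟨w, i, rfl⟩ := ht
  have e1 : w * s i * w⁻¹ = w * (s i * w⁻¹) := mul_assoc _ _ _
  rw [e1, nn_mul]
  have harg : (s i * w⁻¹) * (w * (s i * w⁻¹)) * (s i * w⁻¹)⁻¹ = s i := by
    rw [mul_inv_rev, inv_inv, cs.inv_simple]
    simp only [mul_assoc, inv_mul_cancel_left, cs.simple_mul_simple_cancel_left]
  rw [harg]
  have step2 : nn cs (s i * w⁻¹) (w * (s i * w⁻¹))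
      = nn cs w⁻¹ (w * (s i * w⁻¹)) + nn cs (s i) (s i) := by
    have h := nn_mul cs (s i) w⁻¹ (w * (s i * w⁻¹))
    have harg2 : w⁻¹ * (w * (s i * w⁻¹)) * w⁻¹⁻¹ = s i := by
      rw [inv_inv]
      simp only [mul_assoc, inv_mul_cancel_left, inv_mul_cancel, mul_one]
    rwa [harg2] at h
  have hconj : nn cs w⁻¹ (w * (s i * w⁻¹)) = nn cs w (s i) := by
    have h := nn_inv_conj cs w (s i)
    rwa [e1] at h
  rw [step2, hconj, nn_simple_self]
  rcases zmod2_cases (nn cs w (s i)) with h | h <;> rw [h] <;> decide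

lemma nn_eq_one_of_isRightInversion {w t : W} (ht : cs.IsReflection t)
    (hlt : ℓ (w * t) < ℓ w) : nn cs w t = 1 := by
  rcases zmod2_cases (nn cs w t) with h0 | h1
  · exfalso
    have hwt : nn cs (w * t) t = 1 := by
      rw [nn_mul]
      have harg : t * t * t⁻¹ = t := by rw [ht.mul_self, one_mul, ht.inv]
      rw [harg, nn_reflection_self cs ht, h0, add_zero]
    obtain ⟨ω, hred, hw⟩ := cs.exists_reduced_word' (w * t)
    rw [hw, nn_wordProd] at hwt
    have hmem : t ∈ ris ω := by
      by_contra hmem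
      rw [List.count_eq_zero_of_not_mem hmem] at hwt
      revert hwt; decide
    have hinv := cs.isRightInversion_of_mem_rightInvSeq hred hmem
    rw [← hw] at hinv
    have : ℓ (w * t * t) < ℓ (w * t) := hinv.2
    rw [mul_assoc, ht.mul_self, mul_one] at this
    omega
  · exact h1

/-- Strong exchange (membership form, right). -/
lemma mem_rightInvSeq_of_isRightInversion {ω : List B} (hred : cs.IsReduced ω) {t : W}
    (ht : cs.IsRightInversion (π ω) t) : t ∈ ris ω := by
  have h1 := nn_eq_one_of_isRightInversion cs ht.1 ht.2
  rw [nn_wordProd] at h1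
  by_contra hmem
  rw [List.count_eq_zero_of_not_mem hmem] at h1
  revert h1; decide

/-- Strong exchange (membership form, left). -/
lemma mem_leftInvSeq_of_isLeftInversion {ω : List B} (hred : cs.IsReduced ω) {t : W}
    (ht : cs.IsLeftInversion (π ω) t) : t ∈ lis ω := by
  have hrev : cs.IsReduced ω.reverse := (cs.isReduced_reverse_iff ω).mpr hred
  have hinv : cs.IsRightInversion (π ω.reverse) t := by
    rw [cs.wordProd_reverse]
    constructor
    · exact ht.1
    · have h2 : ((π ω)⁻¹ * t)⁻¹ = t * (π ω) := by
        rw [mul_inv_rev, inv_inv, ht.1.inv]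
      calc ℓ ((π ω)⁻¹ * t) = ℓ (((π ω)⁻¹ * t)⁻¹) := (cs.length_inv _).symm
        _ = ℓ (t * π ω) := by rw [h2]
        _ < ℓ (π ω) := ht.2
        _ = ℓ ((π ω)⁻¹) := (cs.length_inv _).symm
  have := mem_rightInvSeq_of_isRightInversion cs hrev hinv
  rw [cs.rightInvSeq_reverse] at this
  exact List.mem_reverse.mp this

section Parabolic

variable (J : Set B)

/-- Local notation for the standard parabolic subgroup. -/
abbrev Parab : Subgroup W := Subgroup.closure (cs.simple '' J)

lemma simple_mem_parab {i : B} (hi : i ∈ J) : s i ∈ Parab cs J :=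
  Subgroup.subset_closure ⟨i, hi, rfl⟩

lemma wordProd_mem_parab {ω : List B} (hω : ∀ i ∈ ω, i ∈ J) : π ω ∈ Parab cs J := by
  induction ω with
  | nil => simp [CoxeterSystem.wordProd_nil]
  | cons i ω ih =>
    rw [CoxeterSystem.wordProd_cons]
    exact Subgroup.mul_mem _ (simple_mem_parab cs J (hω i (by simp)))
      (ih (fun i hi => hω i (by simp [hi])))

lemma exists_word_of_mem_parab {g : W} (hg : g ∈ Parab cs J) :
    ∃ ω : List B, (∀ i ∈ ω, i ∈ J) ∧ π ω = g := by
  induction hg using Subgroup.closure_induction with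
  | mem x hx =>
    obtain ⟨i, hi, rfl⟩ := hx
    exact ⟨[i], by simpa using hi, by simp⟩
  | one => exact ⟨[], by simp, by simp⟩
  | mul x y _ _ hx hy =>
    obtain ⟨ω₁, h1, rfl⟩ := hx
    obtain ⟨ω₂, h2, rfl⟩ := hy
    refine ⟨ω₁ ++ ω₂, ?_, by rw [cs.wordProd_append]⟩
    intro i hi
    rcases List.mem_append.mp hi with h | h
    · exact h1 i h
    · exact h2 i h
  | inv x _ hx =>
    obtain ⟨ω, h1, rfl⟩ := hx
    exact ⟨ω.reverse, fun i hi => h1 i (List.mem_reverse.mp hi), by rw [cs.wordProd_reverse]⟩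

/-- Deletion property: every word can be replaced by a reduced word
using a subset of its letters. -/
lemma exists_reduced_subword (ω : List B) :
    ∃ ω' : List B, cs.IsReduced ω' ∧ π ω' = π ω ∧ ∀ i ∈ ω', i ∈ ω := by
  induction ω using List.reverseRecOn with
  | nil => exact ⟨[], by simp [CoxeterSystem.IsReduced], by simp, by simp⟩
  | append_singleton ω₀ i ih =>
    obtain ⟨α, hred, hprod, hsub⟩ := ih
    rcases Nat.lt_or_ge (ℓ (π α * s i)) (ℓ (π α)) with hlt | hge
    · -- s i is a right inversion of π α, use strong exchange
      have hinv : cs.IsRightInversion (π α) (s i) := ⟨cs.isReflection_simple i, hlt⟩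
      have hmem := mem_rightInvSeq_of_isRightInversion cs hred hinv
      obtain ⟨j, hj, hget⟩ := List.mem_iff_getElem.mp hmem
      rw [cs.length_rightInvSeq] at hj
      have hgetD : (ris α).getD j 1 = s i := by
        rw [List.getD_eq_getElem _ 1 (by simp [hj]), hget]
      have herase : π α * s i = π (α.eraseIdx j) := by
        rw [← hgetD]; exact cs.wordProd_mul_getD_rightInvSeq α j
      have hlα : ℓ (π α) = α.length := hred
      have hl1 : ℓ (π α * s i) = α.length - 1 := by
        have h2 := cs.length_mul_simple (π α) i
        rcases h2 with h2 | h2 <;> omega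
      have hlen : (α.eraseIdx j).length = α.length - 1 := by
        rw [List.length_eraseIdx]; simp [hj]
      refine ⟨α.eraseIdx j, ?_, ?_, ?_⟩
      · show ℓ (π (α.eraseIdx j)) = (α.eraseIdx j).length
        rw [← herase, hl1, hlen]
      · rw [← herase, cs.wordProd_append, hprod]
        simp
      · intro x hx
        have hx' : x ∈ α := (List.eraseIdx_sublist α j).subset hx
        exact List.mem_append.mpr (Or.inl (hsub x hx'))
    · have hred' : cs.IsReduced (α ++ [i]) := by
        rw [CoxeterSystem.IsReduced, cs.wordProd_append]
        have h2 := cs.length_mul_simple (π α) i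
        rw [CoxeterSystem.IsReduced] at hred
        simp only [cs.wordProd_singleton, List.length_append, List.length_singleton]
        rcases h2 with h2 | h2 <;> omega
      refine ⟨α ++ [i], hred', ?_, ?_⟩
      · rw [cs.wordProd_append, cs.wordProd_append]
        simp [hprod]
      · intro x hx
        rcases List.mem_append.mp hx with h | h
        · exact List.mem_append.mpr (Or.inl (hsub x h))
        · exact List.mem_append.mpr (Or.inr h)

end Parabolic

section Parabolic2

variable (J : Set B)

lemma exists_reduced_word_of_mem_parab {g : W} (hg : g ∈ Parab cs J) :
    ∃ ω : List B, (∀ i ∈ ω, i ∈ J) ∧ cs.IsReduced ω ∧ π ω = g := by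
  obtain ⟨ω, hω, rfl⟩ := exists_word_of_mem_parab cs J hg
  obtain ⟨ω', hred, hprod, hsub⟩ := exists_reduced_subword cs ω
  exact ⟨ω', fun i hi => hω i (hsub i hi), hred, hprod⟩

lemma rightInvSeq_mem_parab {ω : List B} (hω : ∀ i ∈ ω, i ∈ J) {t : W}
    (ht : t ∈ ris ω) : t ∈ Parab cs J := by
  obtain ⟨j, hj, rfl⟩ := List.mem_iff_getElem.mp ht
  rw [cs.length_rightInvSeq] at hj
  have h := cs.getD_rightInvSeq ω j
  rw [List.getD_eq_getElem _ 1 (by simp [hj])] at h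
  rw [h]
  have hdrop : π (ω.drop (j + 1)) ∈ Parab cs J :=
    wordProd_mem_parab cs J (fun i hi => hω i (List.mem_of_mem_drop hi))
  have hj' : ω[j]? = some ω[j] := by
    rw [List.getElem?_eq_getElem hj]
  rw [hj']
  have hsimple : s (ω[j]) ∈ Parab cs J :=
    simple_mem_parab cs J (hω _ (List.getElem_mem hj))
  simpa using Subgroup.mul_mem _ (Subgroup.mul_mem _ (Subgroup.inv_mem _ hdrop) hsimple) hdrop

lemma leftInvSeq_mem_parab {ω : List B} (hω : ∀ i ∈ ω, i ∈ J) {t : W}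
    (ht : t ∈ lis ω) : t ∈ Parab cs J := by
  have h : t ∈ ris ω.reverse := by
    rw [cs.rightInvSeq_reverse]
    exact List.mem_reverse.mpr ht
  exact rightInvSeq_mem_parab cs J (fun i hi => hω i (List.mem_reverse.mp hi)) h

/-- Key additivity: if `w` is minimal in its coset `W_J w`, lengths add. -/
lemma length_add_of_lmin {w : W} (hmin : ∀ u ∈ Parab cs J, ℓ w ≤ ℓ (u * w))
    {u : W} (hu : u ∈ Parab cs J) : ℓ (u * w) = ℓ u + ℓ w := by
  obtain ⟨α, hαJ, hαred, hαprod⟩ := exists_reduced_word_of_mem_parab cs J hu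
  clear hu
  suffices key : ∀ (n : ℕ) (u : W) (α : List B), (∀ i ∈ α, i ∈ J) → cs.IsReduced α →
      π α = u → α.length = n → ℓ (u * w) = ℓ u + ℓ w by
    exact key α.length u α hαJ hαred hαprod rfl
  intro n
  induction n with
  | zero =>
    intro u α hαJ hαred hαprod hn
    have : α = [] := List.length_eq_zero_iff.mp hn
    subst this
    simp at hαprod
    subst hαprod
    simp [cs.length_one]
  | succ n ih =>
    intro u α hαJ hαred hαprod hn
    obtain ⟨i, α₀, rfl⟩ : ∃ i α₀, α = i :: α₀ := by
      cases α with
      | nil => simp at hn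
      | cons i α₀ => exact ⟨i, α₀, rfl⟩
    have hα₀red : cs.IsReduced α₀ := by
      have := CoxeterSystem.IsReduced.drop hαred 1
      simpa using this
    have hα₀J : ∀ x ∈ α₀, x ∈ J := fun x hx => hαJ x (by simp [hx])
    have hα₀len : α₀.length = n := by simpa using hn
    have hIH : ℓ (π α₀ * w) = ℓ (π α₀) + ℓ w :=
      ih (π α₀) α₀ hα₀J hα₀red rfl hα₀len
    have hu : u = s i * π α₀ := by rw [← hαprod, cs.wordProd_cons]
    have hℓu : ℓ u = n + 1 := by rw [← hαprod, hαred]; simpa using hn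
    have hℓα₀ : ℓ (π α₀) = n := by rw [hα₀red]; exact hα₀len
    -- key step : ℓ (s i * (π α₀ * w)) = ℓ (π α₀ * w) + 1
    have hne := cs.length_simple_mul_ne (π α₀ * w) i
    rcases cs.length_simple_mul (π α₀ * w) i with h | h
    · calc ℓ (u * w) = ℓ (s i * (π α₀ * w)) := by rw [hu, mul_assoc]
        _ = ℓ (π α₀ * w) + 1 := h
        _ = n + ℓ w + 1 := by rw [hIH, hℓα₀]
        _ = ℓ u + ℓ w := by rw [hℓu]; omega
    · exfalso
      obtain ⟨ρ, hρred, hρprod⟩ := cs.exists_reduced_word' w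
      have hρlen : ℓ w = ρ.length := by rw [hρprod]; exact hρred
      have hcat_red : cs.IsReduced (α₀ ++ ρ) := by
        show ℓ (π (α₀ ++ ρ)) = _
        rw [cs.wordProd_append, ← hρprod, hIH, hℓα₀]
        simp [hα₀len, hρlen]
      have hinv : cs.IsLeftInversion (π (α₀ ++ ρ)) (s i) := by
        refine ⟨cs.isReflection_simple i, ?_⟩
        rw [cs.wordProd_append, ← hρprod]
        omega
      have hmem := mem_leftInvSeq_of_isLeftInversion cs hcat_red hinv
      obtain ⟨k, hk, hget⟩ := List.mem_iff_getElem.mp hmem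
      rw [cs.length_leftInvSeq, List.length_append] at hk
      have hgetD : (lis (α₀ ++ ρ)).getD k 1 = s i := by
        rw [List.getD_eq_getElem _ 1 (by simp [hk]), hget]
      have herase : s i * π (α₀ ++ ρ) = π ((α₀ ++ ρ).eraseIdx k) := by
        rw [← hgetD]; exact cs.getD_leftInvSeq_mul_wordProd _ _
      rcases Nat.lt_or_ge k α₀.length with hcase | hcase
      · -- erased within α₀ : contradicts that u is reduced of length n+1
        rw [List.eraseIdx_append_of_lt_length hcase] at herase
        simp only [cs.wordProd_append] at herase
        rw [← hρprod] at herase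
        have hueq : u * w = π (α₀.eraseIdx k) * w := by
          rw [hu, mul_assoc, herase]
        have hu2 : u = π (α₀.eraseIdx k) := mul_right_cancel hueq
        have hle : ℓ u ≤ (α₀.eraseIdx k).length := hu2 ▸ cs.length_wordProd_le _
        rw [List.length_eraseIdx] at hle
        simp only [hcase, if_pos] at hle
        omega
      · -- erased within ρ : contradicts minimality of w
        rw [List.eraseIdx_append_of_length_le hcase] at herase
        simp only [cs.wordProd_append] at herase
        rw [← hρprod] at herase
        have heq : (π α₀)⁻¹ * s i * π α₀ * w = π (ρ.eraseIdx (k - α₀.length)) := by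
          rw [mul_assoc, mul_assoc, herase]
          simp [← mul_assoc]
        have htP : (π α₀)⁻¹ * s i * π α₀ ∈ Parab cs J := by
          have h1 : π α₀ ∈ Parab cs J := wordProd_mem_parab cs J hα₀J
          have h2 : s i ∈ Parab cs J := simple_mem_parab cs J (hαJ i (by simp))
          exact Subgroup.mul_mem _ (Subgroup.mul_mem _ (Subgroup.inv_mem _ h1) h2) h1
        have hlen2 : ℓ ((π α₀)⁻¹ * s i * π α₀ * w) ≤ (ρ.eraseIdx (k - α₀.length)).length := by
          rw [heq]; exact cs.length_wordProd_le _
        have hk2 : k - α₀.length < ρ.length := by omega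
        rw [List.length_eraseIdx] at hlen2
        simp only [hk2, if_pos] at hlen2
        have := hmin _ htP
        omega

end Parabolic2

section Corollaries

variable (J : Set B)

lemma length_add_of_rmin {w : W} (hmin : ∀ u ∈ Parab cs J, ℓ w ≤ ℓ (w * u))
    {u : W} (hu : u ∈ Parab cs J) : ℓ (w * u) = ℓ w + ℓ u := by
  have hmin' : ∀ v ∈ Parab cs J, ℓ w⁻¹ ≤ ℓ (v * w⁻¹) := by
    intro v hv
    have h1 : (v * w⁻¹)⁻¹ = w * v⁻¹ := by rw [mul_inv_rev, inv_inv]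
    calc ℓ w⁻¹ = ℓ w := cs.length_inv w
      _ ≤ ℓ (w * v⁻¹) := hmin v⁻¹ (Subgroup.inv_mem _ hv)
      _ = ℓ ((v * w⁻¹)⁻¹) := by rw [h1]
      _ = ℓ (v * w⁻¹) := cs.length_inv _
  calc ℓ (w * u) = ℓ ((w * u)⁻¹) := (cs.length_inv _).symm
    _ = ℓ (u⁻¹ * w⁻¹) := by rw [mul_inv_rev]
    _ = ℓ u⁻¹ + ℓ w⁻¹ := length_add_of_lmin cs J hmin' (Subgroup.inv_mem _ hu)
    _ = ℓ w + ℓ u := by rw [cs.length_inv, cs.length_inv]; omega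

end Corollaries

section Core

/-- The core uniqueness lemma. -/
lemma core_unique (J' J : Set B) (w w' : W)
    (hw : ∀ u ∈ Parab cs J', ℓ w ≤ ℓ (u * w))
    (hw' : ∀ u ∈ Parab cs J', ℓ w' ≤ ℓ (u * w'))
    {x y : W} (hx : x ∈ Parab cs J') (hy : y ∈ Parab cs J)
    (hrel : w' = x * w * y) (hlen : ℓ x = ℓ y) (hww' : ℓ w = ℓ w') :
    w' = w := by
  obtain ⟨α, hαJ, hαred, hαprod⟩ := exists_reduced_word_of_mem_parab cs J' hx
  obtain ⟨ρ, hρred, hρprod⟩ := cs.exists_reduced_word' w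
  obtain ⟨ρ', hρ'red, hρ'prod⟩ := cs.exists_reduced_word' w'
  obtain ⟨ωy, hωJ, hωred, hωprod⟩ :=
    exists_reduced_word_of_mem_parab cs J (Subgroup.inv_mem _ hy)
  have hαlen : α.length = ℓ x := by rw [← hαprod]; exact hαred.symm
  have hρlen : ρ.length = ℓ w := by rw [hρprod]; exact hρred.symm
  have hρ'len : ρ'.length = ℓ w' := by rw [hρ'prod]; exact hρ'red.symm
  have hωlen : ωy.length = ℓ x := by
    have h1 : ℓ (π ωy) = ωy.length := hωred
    rw [hωprod, cs.length_inv] at h1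
    omega
  have heq : x * w = w' * y⁻¹ := by rw [hrel]; group
  have hxw_add : ℓ (x * w) = ℓ x + ℓ w := length_add_of_lmin cs J' hw hx
  -- both concatenated words are reduced words for the same element
  have hprod1 : π (α ++ ρ) = x * w := by
    rw [cs.wordProd_append, hαprod, ← hρprod]
  have hprod2 : π (ρ' ++ ωy) = x * w := by
    rw [cs.wordProd_append, ← hρ'prod, hωprod, ← heq]
  have hred1 : cs.IsReduced (α ++ ρ) := by
    show ℓ (π (α ++ ρ)) = _
    rw [hprod1, hxw_add]
    simp [hαlen, hρlen]
  have hred2 : cs.IsReduced (ρ' ++ ωy) := by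
    show ℓ (π (ρ' ++ ωy)) = _
    rw [hprod2, hxw_add]
    simp [hρ'len, hωlen, ← hww']
    omega
  -- left inversion sets agree
  have hmem_iff : ∀ t : W, t ∈ lis (α ++ ρ) ↔ t ∈ lis (ρ' ++ ωy) := by
    intro t
    constructor
    · intro h
      apply mem_leftInvSeq_of_isLeftInversion cs hred2
      rw [hprod2, ← hprod1]
      exact cs.isLeftInversion_of_mem_leftInvSeq hred1 h
    · intro h
      apply mem_leftInvSeq_of_isLeftInversion cs hred1
      rw [hprod1, ← hprod2]
      exact cs.isLeftInversion_of_mem_leftInvSeq hred2 h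
  -- entries of lis α are in lis (α ++ ρ)
  have hsubA : ∀ t ∈ lis α, t ∈ lis (α ++ ρ) := by
    intro t ht
    have h1 : cs.leftInvSeq α = (cs.leftInvSeq (α ++ ρ)).take α.length := by
      rw [← cs.leftInvSeq_take (α ++ ρ) α.length, List.take_left]
    rw [h1] at ht
    exact List.mem_of_mem_take ht
  -- entries of lis α are not inversions of w'
  have hnotρ' : ∀ t ∈ lis α, t ∉ lis ρ' := by
    intro t ht hmem
    have hP : t ∈ Parab cs J' := leftInvSeq_mem_parab cs J' hαJ ht
    have hinv := cs.isLeftInversion_of_mem_leftInvSeq hρ'red hmem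
    rw [← hρ'prod] at hinv
    have h2 := hinv.2
    have := hw' t hP
    omega
  -- hence entries of lis α are conjugates of entries of lis ωy
  have hconj : ∀ t ∈ lis α, t ∈ (lis ωy).map (fun c => w' * c * w'⁻¹) := by
    intro t ht
    have ht2 : t ∈ lis (ρ' ++ ωy) := (hmem_iff t).mp (hsubA t ht)
    obtain ⟨k, hk, hget⟩ := List.mem_iff_getElem.mp ht2
    rw [cs.length_leftInvSeq, List.length_append] at hk
    rcases Nat.lt_or_ge k ρ'.length with hcase | hcase
    · exfalso
      apply hnotρ' t ht
      have h1 : cs.leftInvSeq ρ' = (cs.leftInvSeq (ρ' ++ ωy)).take ρ'.length := by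
        rw [← cs.leftInvSeq_take (ρ' ++ ωy) ρ'.length, List.take_left]
      rw [h1]
      rw [← hget]
      have hk3 : k < ((lis (ρ' ++ ωy)).take ρ'.length).length := by
        simp [hk, hcase]
      exact List.mem_iff_getElem.mpr ⟨k, hk3, List.getElem_take⟩
    · -- k in the ωy part
      set k' := k - ρ'.length with hk'
      have hk'lt : k' < ωy.length := by omega
      have hgetD : (lis (ρ' ++ ωy)).getD k 1 = t := by
        rw [List.getD_eq_getElem _ 1 (by simp; omega), hget]
      have hform := cs.getD_leftInvSeq (ρ' ++ ωy) k
      rw [hgetD] at hform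
      have htake : (ρ' ++ ωy).take k = ρ' ++ ωy.take k' := by
        rw [List.take_append, List.take_of_length_le (by omega), hk']
      have hget2 : (ρ' ++ ωy)[k]? = some (ωy[k']) := by
        rw [List.getElem?_eq_getElem (by simp; omega)]
        congr 1
        rw [List.getElem_append_right hcase]
      have hformy := cs.getD_leftInvSeq ωy k'
      have hgety : ωy[k']? = some (ωy[k']) := by
        rw [List.getElem?_eq_getElem hk'lt]
      rw [hgety] at hformy
      rw [htake, hget2, cs.wordProd_append, ← hρ'prod] at hform
      refine List.mem_map.mpr ⟨(lis ωy).getD k' 1, ?_, ?_⟩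
      · rw [List.getD_eq_getElem _ 1 (by simp [hk'lt])]
        exact List.getElem_mem _
      · rw [hformy, hform]
        simp only [Option.map_some, Option.getD_some]
        rw [mul_inv_rev]
        simp [mul_assoc]
  -- cardinality argument : the two sets coincide
  classical
  have hnodupα : (lis α).Nodup := hαred.nodup_leftInvSeq
  have hnodupy : ((lis ωy).map (fun c => w' * c * w'⁻¹)).Nodup := by
    apply List.Nodup.map _ hωred.nodup_leftInvSeq
    intro c₁ c₂ hcc
    have h2 := congrArg (fun z => w'⁻¹ * z * w') hcc
    simpa [mul_assoc] using h2
  have hsubF : (lis α).toFinset ⊆ ((lis ωy).map (fun c => w' * c * w'⁻¹)).toFinset := by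
    intro t ht
    rw [List.mem_toFinset] at ht ⊢
    exact hconj t ht
  have hcard : ((lis ωy).map (fun c => w' * c * w'⁻¹)).toFinset.card
      ≤ ((lis α).toFinset).card := by
    rw [List.toFinset_card_of_nodup hnodupα, List.toFinset_card_of_nodup hnodupy]
    simp [hαlen, hωlen]
  have hFeq := Finset.eq_of_subset_of_card_le hsubF hcard
  -- each conjugate w' * c * w'⁻¹ lies in Parab J'
  have hconjP : ∀ c ∈ lis ωy, w' * c * w'⁻¹ ∈ Parab cs J' := by
    intro c hc
    have hmem : w' * c * w'⁻¹ ∈ ((lis ωy).map (fun r => w' * r * w'⁻¹)).toFinset := by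
      rw [List.mem_toFinset]
      exact List.mem_map.mpr ⟨c, hc, rfl⟩
    rw [← hFeq, List.mem_toFinset] at hmem
    exact leftInvSeq_mem_parab cs J' hαJ hmem
  -- conclude : w' * y * w'⁻¹ ∈ Parab J'
  have hprody : (lis ωy).prod = y := by
    rw [cs.prod_leftInvSeq, hωprod, inv_inv]
  have hmapeq : ((lis ωy).map (fun c => w' * c * w'⁻¹)).prod
      = w' * (lis ωy).prod * w'⁻¹ := by
    induction (lis ωy) with
    | nil => simp
    | cons c l ih =>
      rw [List.map_cons, List.prod_cons, ih, List.prod_cons]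
      group
  have hyP' : w' * y * w'⁻¹ ∈ Parab cs J' := by
    rw [← hprody, ← hmapeq]
    apply Subgroup.list_prod_mem
    intro z hz
    obtain ⟨c, hc, rfl⟩ := List.mem_map.mp hz
    exact hconjP c hc
  -- final step
  have hxw2 : w' = ((w' * y * w'⁻¹) * x) * w := by rw [hrel]; group
  have hP2 : (w' * y * w'⁻¹) * x ∈ Parab cs J' := Subgroup.mul_mem _ hyP' hx
  have hadd : ℓ (((w' * y * w'⁻¹) * x) * w) = ℓ ((w' * y * w'⁻¹) * x) + ℓ w :=
    length_add_of_lmin cs J' hw hP2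
  rw [← hxw2] at hadd
  have hz : ℓ ((w' * y * w'⁻¹) * x) = 0 := by omega
  have hone : (w' * y * w'⁻¹) * x = 1 := cs.length_eq_zero_iff.mp hz
  rw [hxw2, hone, one_mul]

end Core

section Delta

variable {B₂ W₂ : Type*} [Group W₂] {M₂ : CoxeterMatrix B₂} (cs₂ : CoxeterSystem M₂ W₂)

/-- Transport of words along a multiplicative map sending simple reflections to
simple reflections. -/
lemma delta_length_le (J : Set B) (J₂ : Set B₂) (δ : W → W₂)
    (hmul : ∀ a ∈ Parab cs J, ∀ b ∈ Parab cs J, δ (a * b) = δ a * δ b)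
    (hsim : ∀ i ∈ J, δ (cs.simple i) ∈ cs₂.simple '' J₂)
    {g : W} (hg : g ∈ Parab cs J) : cs₂.length (δ g) ≤ cs.length g := by
  have hone : δ 1 = 1 := by
    have h := hmul 1 (Subgroup.one_mem _) 1 (Subgroup.one_mem _)
    rw [mul_one] at h
    exact left_eq_mul.mp h
  obtain ⟨α, hαJ, hαred, hαprod⟩ := exists_reduced_word_of_mem_parab cs J hg
  suffices h : ∀ α : List B, (∀ i ∈ α, i ∈ J) →
      ∃ ω₂ : List B₂, ω₂.length = α.length ∧ δ (π α) = cs₂.wordProd ω₂ by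
    obtain ⟨ω₂, hlen, hprod⟩ := h α hαJ
    calc cs₂.length (δ g) = cs₂.length (cs₂.wordProd ω₂) := by rw [← hαprod, hprod]
      _ ≤ ω₂.length := cs₂.length_wordProd_le ω₂
      _ = α.length := hlen
      _ = ℓ g := by rw [← hαprod]; exact hαred.symm
  intro α
  induction α with
  | nil =>
    intro _
    exact ⟨[], by simp, by simpa using hone⟩
  | cons i α₀ ih =>
    intro hJ
    obtain ⟨ω₂, hlen, hprod⟩ := ih (fun j hj => hJ j (by simp [hj]))
    obtain ⟨i₂, hi₂, hsimeq⟩ := hsim i (hJ i (by simp))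
    refine ⟨i₂ :: ω₂, by simp [hlen], ?_⟩
    rw [cs.wordProd_cons, cs₂.wordProd_cons,
      hmul (s i) (simple_mem_parab cs J (hJ i (by simp)))
        (π α₀) (wordProd_mem_parab cs J (fun j hj => hJ j (by simp [hj]))),
      hprod, hsimeq]

end Delta

section Delta2

variable {B₂ W₂ : Type*} [Group W₂] {M₂ : CoxeterMatrix B₂} (cs₂ : CoxeterSystem M₂ W₂)

lemma delta_length_eq (J : Set B) (J₂ : Set B₂) (δ : W → W₂)
    (hbij : Set.BijOn δ (Parab cs J : Set W) (Parab cs₂ J₂ : Set W₂))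
    (hmul : ∀ a ∈ Parab cs J, ∀ b ∈ Parab cs J, δ (a * b) = δ a * δ b)
    (hsimeq : δ '' (cs.simple '' J) = cs₂.simple '' J₂)
    {g : W} (hg : g ∈ Parab cs J) : cs₂.length (δ g) = cs.length g := by
  have hsim : ∀ i ∈ J, δ (cs.simple i) ∈ cs₂.simple '' J₂ := by
    intro i hi
    rw [← hsimeq]
    exact ⟨cs.simple i, ⟨i, hi, rfl⟩, rfl⟩
  have hle := delta_length_le cs cs₂ J J₂ δ hmul hsim hg
  -- inverse map
  set δi := Function.invFunOn δ (Parab cs J : Set W) with hδi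
  have hleft : ∀ g' ∈ Parab cs J, δi (δ g') = g' := fun g' hg' =>
    Set.InjOn.leftInvOn_invFunOn hbij.injOn hg'
  have hsurj : ∀ h ∈ Parab cs₂ J₂, ∃ g' ∈ Parab cs J, δ g' = h := by
    intro h hh
    obtain ⟨g', hg', hgh⟩ := hbij.surjOn hh
    exact ⟨g', hg', hgh⟩
  have himul : ∀ a ∈ Parab cs₂ J₂, ∀ b ∈ Parab cs₂ J₂, δi (a * b) = δi a * δi b := by
    intro a ha b hb
    obtain ⟨ga, hga, rfl⟩ := hsurj a ha
    obtain ⟨gb, hgb, rfl⟩ := hsurj b hb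
    rw [← hmul ga hga gb hgb, hleft _ (Subgroup.mul_mem _ hga hgb), hleft _ hga, hleft _ hgb]
  have hisim : ∀ i ∈ J₂, δi (cs₂.simple i) ∈ cs.simple '' J := by
    intro i hi
    have h1 : cs₂.simple i ∈ δ '' (cs.simple '' J) := by
      rw [hsimeq]; exact ⟨i, hi, rfl⟩
    obtain ⟨sx, hsx, heq⟩ := h1
    obtain ⟨j, hj, rfl⟩ := hsx
    rw [← heq, hleft _ (simple_mem_parab cs J hj)]
    exact ⟨j, hj, rfl⟩
  have hge := delta_length_le cs₂ cs J₂ J δi himul hisim (hbij.mapsTo hg)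
  rw [hleft g hg] at hge
  omega

end Delta2

end

end CoxAux

end Aux

/-- Corollary 2.5: for admissible triples `c = (J₁, J₂, δ)` and `c' = (J'₁, J'₂, δ')` of
`W₁ × W₂`, each double coset in `W_{c'} \ (W₁ × W₂) / W_c` contains at most one element
`(w₁, w₂)` with `w₁ ∈ ^{J'₁}W₁` and `w₂ ∈ W₂^{J₂}`. -/
theorem unique_min_rep_pair_in_double_coset
    (cs₁ : CoxeterSystem M₁ W₁) (cs₂ : CoxeterSystem M₂ W₂)
    (J₁ J'₁ : Set B₁) (J₂ J'₂ : Set B₂) (δ δ' : W₁ → W₂)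
    -- `c = (J₁, J₂, δ)` is admissible
    (hδbij : Set.BijOn δ (StdParabolic cs₁ J₁) (StdParabolic cs₂ J₂))
    (hδmul : ∀ a ∈ StdParabolic cs₁ J₁, ∀ b ∈ StdParabolic cs₁ J₁, δ (a * b) = δ a * δ b)
    (hδsim : δ '' (cs₁.simple '' J₁) = cs₂.simple '' J₂)
    -- `c' = (J'₁, J'₂, δ')` is admissible
    (hδ'bij : Set.BijOn δ' (StdParabolic cs₁ J'₁) (StdParabolic cs₂ J'₂))
    (hδ'mul : ∀ a ∈ StdParabolic cs₁ J'₁, ∀ b ∈ StdParabolic cs₁ J'₁,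
      δ' (a * b) = δ' a * δ' b)
    (hδ'sim : δ' '' (cs₁.simple '' J'₁) = cs₂.simple '' J'₂)
    (w₁ w₁' : W₁) (w₂ w₂' : W₂)
    (h₁ : ∀ u ∈ StdParabolic cs₁ J'₁, cs₁.length w₁ ≤ cs₁.length (u * w₁))
    (h₂ : ∀ u ∈ StdParabolic cs₂ J₂, cs₂.length w₂ ≤ cs₂.length (w₂ * u))
    (h₁' : ∀ u ∈ StdParabolic cs₁ J'₁, cs₁.length w₁' ≤ cs₁.length (u * w₁'))
    (h₂' : ∀ u ∈ StdParabolic cs₂ J₂, cs₂.length w₂' ≤ cs₂.length (w₂' * u))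
    (hcoset : ∃ x ∈ StdParabolic cs₁ J'₁, ∃ y ∈ StdParabolic cs₁ J₁,
      w₁' = x * w₁ * y ∧ w₂' = δ' x * w₂ * δ y) :
    w₁' = w₁ ∧ w₂' = w₂ := by
  classical
  obtain ⟨x, hx, y, hy, hrel1, hrel2⟩ := hcoset
  have hx : x ∈ CoxAux.Parab cs₁ J'₁ := hx
  have hy : y ∈ CoxAux.Parab cs₁ J₁ := hy
  have h₁ : ∀ u ∈ CoxAux.Parab cs₁ J'₁, cs₁.length w₁ ≤ cs₁.length (u * w₁) := h₁
  have h₂ : ∀ u ∈ CoxAux.Parab cs₂ J₂, cs₂.length w₂ ≤ cs₂.length (w₂ * u) := h₂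
  have h₁' : ∀ u ∈ CoxAux.Parab cs₁ J'₁, cs₁.length w₁' ≤ cs₁.length (u * w₁') := h₁'
  have h₂' : ∀ u ∈ CoxAux.Parab cs₂ J₂, cs₂.length w₂' ≤ cs₂.length (w₂' * u) := h₂'
  -- length preservation of δ and δ'
  have hδylen : cs₂.length (δ y) = cs₁.length y :=
    CoxAux.delta_length_eq cs₁ cs₂ J₁ J₂ δ hδbij hδmul hδsim hy
  have hδ'xlen : cs₂.length (δ' x) = cs₁.length x :=
    CoxAux.delta_length_eq cs₁ cs₂ J'₁ J'₂ δ' hδ'bij hδ'mul hδ'sim hx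
  have hδyP : δ y ∈ CoxAux.Parab cs₂ J₂ := hδbij.mapsTo hy
  have hδ'xP : δ' x ∈ CoxAux.Parab cs₂ J'₂ := hδ'bij.mapsTo hx
  -- additivity of lengths for minimal coset representatives
  have e1 : cs₁.length (x * w₁) = cs₁.length x + cs₁.length w₁ :=
    CoxAux.length_add_of_lmin cs₁ J'₁ h₁ hx
  have e2 : cs₁.length (x⁻¹ * w₁') = cs₁.length x + cs₁.length w₁' := by
    have h := CoxAux.length_add_of_lmin cs₁ J'₁ h₁' (Subgroup.inv_mem _ hx)
    rwa [cs₁.length_inv] at h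
  have e3 : cs₂.length (w₂' * (δ y)⁻¹) = cs₂.length w₂' + cs₂.length (δ y) := by
    have h := CoxAux.length_add_of_rmin cs₂ J₂ h₂' (Subgroup.inv_mem _ hδyP)
    rwa [cs₂.length_inv] at h
  have e4 : cs₂.length (w₂ * δ y) = cs₂.length w₂ + cs₂.length (δ y) :=
    CoxAux.length_add_of_rmin cs₂ J₂ h₂ hδyP
  -- identities
  have i1 : x⁻¹ * w₁' = w₁ * y := by rw [hrel1]; group
  have i2 : x * w₁ = w₁' * y⁻¹ := by rw [hrel1]; group
  have i3 : w₂' * (δ y)⁻¹ = δ' x * w₂ := by rw [hrel2]; group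
  have i4 : w₂ * δ y = (δ' x)⁻¹ * w₂' := by rw [hrel2]; group
  -- triangle inequalities
  have t1 : cs₁.length (w₁ * y) ≤ cs₁.length w₁ + cs₁.length y := cs₁.length_mul_le _ _
  have t2 : cs₁.length (w₁' * y⁻¹) ≤ cs₁.length w₁' + cs₁.length y := by
    have h := cs₁.length_mul_le w₁' y⁻¹
    rwa [cs₁.length_inv] at h
  have t3 : cs₂.length (δ' x * w₂) ≤ cs₂.length (δ' x) + cs₂.length w₂ :=
    cs₂.length_mul_le _ _
  have t4 : cs₂.length ((δ' x)⁻¹ * w₂') ≤ cs₂.length (δ' x) + cs₂.length w₂' := by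
    have h := cs₂.length_mul_le (δ' x)⁻¹ w₂'
    rwa [cs₂.length_inv] at h
  rw [← i1, e2] at t1
  rw [← i2, e1] at t2
  rw [← i3, e3] at t3
  rw [← i4, e4] at t4
  -- first coordinate
  have hw1 : w₁' = w₁ :=
    CoxAux.core_unique cs₁ J'₁ J₁ w₁ w₁' h₁ h₁' hx hy hrel1 (by omega) (by omega)
  -- second coordinate, via taking inverses
  have hmin2 : ∀ u ∈ CoxAux.Parab cs₂ J₂, cs₂.length w₂⁻¹ ≤ cs₂.length (u * w₂⁻¹) := by
    intro u hu
    have hinv : (u * w₂⁻¹)⁻¹ = w₂ * u⁻¹ := by rw [mul_inv_rev, inv_inv]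
    calc cs₂.length w₂⁻¹ = cs₂.length w₂ := cs₂.length_inv w₂
      _ ≤ cs₂.length (w₂ * u⁻¹) := h₂ u⁻¹ (Subgroup.inv_mem _ hu)
      _ = cs₂.length ((u * w₂⁻¹)⁻¹) := by rw [hinv]
      _ = cs₂.length (u * w₂⁻¹) := cs₂.length_inv _
  have hmin2' : ∀ u ∈ CoxAux.Parab cs₂ J₂, cs₂.length w₂'⁻¹ ≤ cs₂.length (u * w₂'⁻¹) := by
    intro u hu
    have hinv : (u * w₂'⁻¹)⁻¹ = w₂' * u⁻¹ := by rw [mul_inv_rev, inv_inv]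
    calc cs₂.length w₂'⁻¹ = cs₂.length w₂' := cs₂.length_inv w₂'
      _ ≤ cs₂.length (w₂' * u⁻¹) := h₂' u⁻¹ (Subgroup.inv_mem _ hu)
      _ = cs₂.length ((u * w₂'⁻¹)⁻¹) := by rw [hinv]
      _ = cs₂.length (u * w₂'⁻¹) := cs₂.length_inv _
  have hrel2' : w₂'⁻¹ = (δ y)⁻¹ * w₂⁻¹ * (δ' x)⁻¹ := by rw [hrel2]; group
  have hw2inv : w₂'⁻¹ = w₂⁻¹ :=
    CoxAux.core_unique cs₂ J₂ J'₂ w₂⁻¹ w₂'⁻¹ hmin2 hmin2'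
      (Subgroup.inv_mem _ hδyP) (Subgroup.inv_mem _ hδ'xP) hrel2'
      (by rw [cs₂.length_inv, cs₂.length_inv]; omega)
      (by rw [cs₂.length_inv, cs₂.length_inv]; omega)
  exact ⟨hw1, inv_injective hw2inv⟩
end

section
/- Let (W, I) be a Coxeter group, let J, J' ⊆ I with an isomorphism δ: W_J → W_{J'} satisfying δ(J) = J', and let w ∈ W_J and x ∈ W^J (minimal coset representative of xW_J). Then ℓ(x w δ(x)⁻¹) ≥ ℓ(w). In particular, if J = δ(J) = J' and w has minimal length in its δ|_J-twisted conjugacy class in W_J, then w has minimal length in its δ-twisted conjugacy class in W (when δ extends to W). -/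
open CoxeterSystem List

namespace TwistAux

/-- Reflection-cocycle group: pairs of a `ZMod 2`-valued function on `W` and an element. -/
@[ext] structure TCG (W : Type*) where
  sgn : W → ZMod 2
  elt : W

variable {W : Type*} [Group W]

instance : Group (TCG W) where
  mul a b := ⟨fun t => a.sgn (b.elt * t * b.elt⁻¹) + b.sgn t, a.elt * b.elt⟩
  one := ⟨fun _ => 0, 1⟩
  inv a := ⟨fun t => a.sgn (a.elt⁻¹ * t * a.elt), a.elt⁻¹⟩
  mul_assoc a b c := by
    ext t
    · show (a.sgn (b.elt * (c.elt * t * c.elt⁻¹) * b.elt⁻¹) + b.sgn (c.elt * t * c.elt⁻¹))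
        + c.sgn t = a.sgn ((b.elt * c.elt) * t * (b.elt * c.elt)⁻¹)
        + (b.sgn (c.elt * t * c.elt⁻¹) + c.sgn t)
      have h : b.elt * (c.elt * t * c.elt⁻¹) * b.elt⁻¹
          = (b.elt * c.elt) * t * (b.elt * c.elt)⁻¹ := by group
      rw [h, add_assoc]
    · show a.elt * b.elt * c.elt = a.elt * (b.elt * c.elt)
      rw [mul_assoc]
  one_mul a := by
    ext t
    · show (0 : ZMod 2) + a.sgn t = a.sgn t
      rw [zero_add]
    · show 1 * a.elt = a.elt
      rw [one_mul]
  mul_one a := by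
    ext t
    · show a.sgn (1 * t * 1⁻¹) + 0 = a.sgn t
      rw [inv_one, one_mul, mul_one, add_zero]
    · show a.elt * 1 = a.elt
      rw [mul_one]
  inv_mul_cancel a := by
    ext t
    · show a.sgn (a.elt⁻¹ * (a.elt * t * a.elt⁻¹) * a.elt) + a.sgn t = 0
      have : a.elt⁻¹ * (a.elt * t * a.elt⁻¹) * a.elt = t := by group
      rw [this, CharTwo.add_self_eq_zero]
    · show a.elt⁻¹ * a.elt = 1
      rw [inv_mul_cancel]

theorem TCG.mul_sgn (a b : TCG W) (t : W) :
    (a * b).sgn t = a.sgn (b.elt * t * b.elt⁻¹) + b.sgn t := rfl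

theorem TCG.mul_elt (a b : TCG W) : (a * b).elt = a.elt * b.elt := rfl

theorem TCG.one_sgn (t : W) : (1 : TCG W).sgn t = 0 := rfl

theorem TCG.one_elt : (1 : TCG W).elt = 1 := rfl

end TwistAux

namespace TwistAux
open List

variable {B W : Type*} [Group W] {M : CoxeterMatrix B} (cs : CoxeterSystem M W)

theorem rightInvSeq_cons (i : B) (ω : List B) :
    cs.rightInvSeq (i :: ω) =
      ((cs.wordProd ω)⁻¹ * cs.simple i * cs.wordProd ω) :: cs.rightInvSeq ω := rfl

section DecEq
variable [DecidableEq W]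

/-- The generators of the cocycle representation. -/
def gen (i : B) : TCG W := ⟨fun t => if t = cs.simple i then 1 else 0, cs.simple i⟩

/-- The cocycle data associated to a word. -/
def Fof (ω : List B) : TCG W :=
  ⟨fun t => ((cs.rightInvSeq ω).count t : ZMod 2), cs.wordProd ω⟩

theorem Fof_nil : Fof cs ([] : List B) = 1 := by
  ext t
  · show ((count t ([] : List W) : ℕ) : ZMod 2) = 0
    simp
  · show cs.wordProd [] = 1
    exact cs.wordProd_nil

theorem Fof_cons (i : B) (ω : List B) : Fof cs (i :: ω) = gen cs i * Fof cs ω := by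
  ext t
  · rw [TCG.mul_sgn]
    simp only [Fof, gen, rightInvSeq_cons, List.count_cons]
    have hiff : ((cs.wordProd ω)⁻¹ * cs.simple i * cs.wordProd ω == t) = true
        ↔ cs.wordProd ω * t * (cs.wordProd ω)⁻¹ = cs.simple i := by
      rw [beq_iff_eq]
      constructor <;> intro h <;> rw [← h] <;> group
    push_cast
    by_cases h : cs.wordProd ω * t * (cs.wordProd ω)⁻¹ = cs.simple i
    · rw [if_pos (hiff.mpr h), if_pos h]; ring
    · rw [if_neg (fun hh => h (hiff.mp hh)), if_neg h]; ring
  · simp only [Fof, gen, TCG.mul_elt, cs.wordProd_cons]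

theorem Fof_alt_pow (i i' : B) (m : ℕ) :
    (gen cs i * gen cs i') ^ m = Fof cs (CoxeterSystem.alternatingWord i i' (2 * m)) := by
  induction m with
  | zero => simpa [CoxeterSystem.alternatingWord] using (Fof_nil cs).symm
  | succ m ih =>
    have h2 : 2 * (m + 1) = (2 * m + 1) + 1 := by ring
    rw [h2, CoxeterSystem.alternatingWord_succ' i i' (2 * m + 1),
      if_neg (by simp [Nat.even_add_one, Nat.not_even_iff_odd]),
      CoxeterSystem.alternatingWord_succ' i i' (2 * m), if_pos (by simp),
      Fof_cons, Fof_cons, ← ih, pow_succ', mul_assoc]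

theorem drop_alternatingWord (i i' : B) (k n : ℕ) :
    List.drop k (CoxeterSystem.alternatingWord i i' n)
      = CoxeterSystem.alternatingWord i i' (n - k) := by
  induction k generalizing n with
  | zero => simp
  | succ k ih =>
    cases n with
    | zero => simp [CoxeterSystem.alternatingWord]
    | succ n =>
      rw [CoxeterSystem.alternatingWord_succ', List.drop_succ_cons, ih n]
      congr 1
      omega

theorem get?_alternatingWord (i i' : B) (n j : ℕ) (h : j < n) :
    (CoxeterSystem.alternatingWord i i' n)[j]?
      = some (if Even (n - j - 1) then i' else i) := by
  have h1 : (CoxeterSystem.alternatingWord i i' n)[j]?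
      = (List.drop j (CoxeterSystem.alternatingWord i i' n))[0]? := by
    rw [List.getElem?_drop, Nat.add_zero]
  rw [h1, drop_alternatingWord]
  obtain ⟨e, he⟩ : ∃ e, n - j = e + 1 := ⟨n - j - 1, by omega⟩
  have h2 : n - j - 1 = e := by omega
  rw [he, CoxeterSystem.alternatingWord_succ', Nat.add_sub_cancel]
  rfl

theorem simple_comm_pow (i i' : B) (a : ℕ) :
    cs.simple i' * (cs.simple i * cs.simple i') ^ a
      = (cs.simple i' * cs.simple i) ^ a * cs.simple i' := by
  induction a with
  | zero => simp
  | succ a ih =>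
    rw [pow_succ, ← mul_assoc, ih, pow_succ]
    group

theorem inv_simple_mul (i i' : B) :
    (cs.simple i * cs.simple i')⁻¹ = cs.simple i' * cs.simple i := by
  rw [mul_inv_rev, cs.inv_simple, cs.inv_simple]

theorem ris_alt_getD (i i' : B) (n j : ℕ) (h : j < n) :
    (cs.rightInvSeq (CoxeterSystem.alternatingWord i i' n)).getD j 1
      = cs.simple i' * (cs.simple i * cs.simple i') ^ (n - 1 - j) := by
  rw [cs.getD_rightInvSeq, drop_alternatingWord,
    get?_alternatingWord i i' n j h]
  have hd : n - (j + 1) = n - 1 - j := by omega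
  have hd2 : n - j - 1 = n - 1 - j := by omega
  rw [hd, hd2, CoxeterSystem.prod_alternatingWord_eq_mul_pow]
  set e := n - 1 - j with hedef
  rcases Nat.even_or_odd e with he | he
  · obtain ⟨c, hc⟩ := he
    have h2 : e / 2 = c := by omega
    rw [if_pos ⟨c, hc⟩, if_pos ⟨c, hc⟩, h2]
    simp only [Option.map_some, Option.getD_some, one_mul]
    rw [← inv_pow, inv_simple_mul]
    calc (cs.simple i' * cs.simple i) ^ c * cs.simple i'
        * (cs.simple i * cs.simple i') ^ c
        = cs.simple i' * (cs.simple i * cs.simple i') ^ c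
          * (cs.simple i * cs.simple i') ^ c := by rw [simple_comm_pow]
      _ = cs.simple i' * (cs.simple i * cs.simple i') ^ e := by
          rw [mul_assoc, ← pow_add]
          congr 2
          omega
  · obtain ⟨c, hc⟩ := he
    have h2 : e / 2 = c := by omega
    have hne : ¬ Even e := by rw [Nat.not_even_iff_odd]; exact ⟨c, hc⟩
    rw [if_neg hne, if_neg hne, h2]
    simp only [Option.map_some, Option.getD_some]
    rw [mul_inv_rev, ← inv_pow, inv_simple_mul, cs.inv_simple]
    rw [← simple_comm_pow cs i i' c]
    have h3 : cs.simple i * (cs.simple i' * (cs.simple i * cs.simple i') ^ c)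
        = (cs.simple i * cs.simple i') ^ (c + 1) := by
      rw [pow_succ', ← mul_assoc]
    rw [mul_assoc (cs.simple i' * (cs.simple i * cs.simple i') ^ c) (cs.simple i), h3,
      mul_assoc, ← pow_add]
    congr 2
    omega

theorem ris_alt_double (i i' : B) :
    cs.rightInvSeq (CoxeterSystem.alternatingWord i i' (2 * M i i'))
      = cs.rightInvSeq (CoxeterSystem.alternatingWord i i' (M i i'))
        ++ cs.rightInvSeq (CoxeterSystem.alternatingWord i i' (M i i')) := by
  set m := M i i' with hm
  apply List.ext_getElem
  · simp; omega
  · intro j h1 h2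
    rw [cs.length_rightInvSeq, CoxeterSystem.length_alternatingWord] at h1
    have hjm : j < m ∨ (m ≤ j ∧ j - m < m) := by omega
    rw [← List.getD_eq_getElem _ 1, ← List.getD_eq_getElem _ 1,
      ris_alt_getD cs i i' (2 * m) j h1]
    rcases hjm with hj | ⟨hj1, hj2⟩
    · rw [List.getD_append _ _ 1 j (by simp [hj]), ris_alt_getD cs i i' m j hj]
      have : 2 * m - 1 - j = (m - 1 - j) + m := by omega
      rw [this, pow_add, hm, cs.simple_mul_simple_pow i i', mul_one]
    · rw [List.getD_append_right _ _ 1 j (by simp [hj1])]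
      have hlen : (cs.rightInvSeq (CoxeterSystem.alternatingWord i i' m)).length = m := by
        simp
      rw [hlen, ris_alt_getD cs i i' m (j - m) hj2]
      congr 2
      omega

theorem liftable : CoxeterMatrix.IsLiftable M (gen cs) := by
  intro i i'
  rw [Fof_alt_pow]
  ext t
  · show ((List.count t (cs.rightInvSeq (CoxeterSystem.alternatingWord i i'
      (2 * M i i'))) : ℕ) : ZMod 2) = 0
    rw [ris_alt_double, List.count_append]
    push_cast
    rw [CharTwo.add_self_eq_zero]
  · show cs.wordProd (CoxeterSystem.alternatingWord i i' (2 * M i i')) = 1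
    rw [CoxeterSystem.prod_alternatingWord_eq_mul_pow, if_pos (by simp [Nat.even_mul]),
      one_mul]
    have : 2 * M i i' / 2 = M i i' := by omega
    rw [this, cs.simple_mul_simple_pow i i']

/-- The cocycle homomorphism. -/
def nhom : W →* TCG W := cs.lift ⟨gen cs, liftable cs⟩

theorem nhom_simple (i : B) : nhom cs (cs.simple i) = gen cs i :=
  cs.lift_apply_simple (liftable cs) i

theorem nhom_wordProd (ω : List B) : nhom cs (cs.wordProd ω) = Fof cs ω := by
  induction ω with
  | nil => rw [cs.wordProd_nil, map_one, Fof_nil]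
  | cons i ω ih => rw [cs.wordProd_cons, map_mul, nhom_simple, ih, Fof_cons]

end DecEq

theorem mem_ris_of_isRightDescent [DecidableEq W] {w : W} {i : B}
    (hw : cs.IsRightDescent w i) {ω : List B} (hω : cs.IsReduced ω)
    (hπ : cs.wordProd ω = w) : cs.simple i ∈ cs.rightInvSeq ω := by
  have hparity : (nhom cs w).sgn (cs.simple i) = 1 := by
    obtain ⟨τ, hτred, hτ⟩ := cs.exists_reduced_word' (w * cs.simple i)
    have hκ : cs.wordProd (τ.concat i) = w := by
      rw [cs.wordProd_concat, ← hτ, mul_assoc, cs.simple_mul_simple_self, mul_one]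
    rw [← hκ, nhom_wordProd]
    show ((List.count (cs.simple i) (cs.rightInvSeq (τ.concat i)) : ℕ) : ZMod 2) = 1
    have hnot : cs.simple i ∉ cs.rightInvSeq τ := by
      intro hmem
      have h2 := (cs.isRightInversion_of_mem_rightInvSeq hτred hmem).2
      rw [← hτ, mul_assoc, cs.simple_mul_simple_self, mul_one] at h2
      exact Nat.lt_asymm hw h2
    rw [cs.rightInvSeq_concat, List.concat_eq_append, List.count_append]
    have hconj : cs.simple i = (MulAut.conj (cs.simple i)) (cs.simple i) := by
      simp
    rw [List.count_singleton]
    nth_rw 1 [hconj]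
    rw [List.count_map_of_injective _ _ (MulAut.conj (cs.simple i)).injective,
      List.count_eq_zero_of_not_mem hnot]
    norm_num
  rw [← hπ, nhom_wordProd] at hparity
  have : ((List.count (cs.simple i) (cs.rightInvSeq ω) : ℕ) : ZMod 2) = 1 := hparity
  by_contra hmem
  rw [List.count_eq_zero_of_not_mem hmem] at this
  simp at this

/-- The (right) exchange property. -/
theorem exchange {ω : List B} (hω : cs.IsReduced ω) {i : B}
    (hd : cs.IsRightDescent (cs.wordProd ω) i) :
    ∃ j < ω.length, cs.wordProd (ω.eraseIdx j) = cs.wordProd ω * cs.simple i := by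
  classical
  have hmem := mem_ris_of_isRightDescent cs hd hω rfl
  obtain ⟨j, hj, hgd⟩ := List.getElem_of_mem hmem
  have hj' : j < ω.length := by
    rw [cs.length_rightInvSeq] at hj
    exact hj
  refine ⟨j, hj', ?_⟩
  rw [← cs.wordProd_mul_getD_rightInvSeq ω j]
  congr 1
  rw [List.getD_eq_getElem _ _ hj, hgd]

/-- The deletion property. -/
theorem deletion {ω : List B} (h : ¬ cs.IsReduced ω) :
    ∃ j k, j < k ∧ k < ω.length ∧
      cs.wordProd ((ω.eraseIdx k).eraseIdx j) = cs.wordProd ω := by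
  induction ω using List.reverseRecOn with
  | nil =>
    exact absurd (by simp [CoxeterSystem.IsReduced]) h
  | append_singleton τ i ih =>
    by_cases hτ : cs.IsReduced τ
    · have hne : cs.length (cs.wordProd (τ ++ [i])) ≠ (τ ++ [i]).length := h
      rw [← List.concat_eq_append, cs.wordProd_concat] at hne ⊢
      have hd : cs.IsRightDescent (cs.wordProd τ) i := by
        rcases cs.length_mul_simple (cs.wordProd τ) i with h1 | h1
        · exfalso
          apply hne
          rw [h1, hτ]
          simp
        · show cs.length _ < cs.length _
          omega
      obtain ⟨j, hj, hprod⟩ := exchange cs hτ hd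
      refine ⟨j, τ.length, hj, by simp, ?_⟩
      have he1 : (τ.concat i).eraseIdx τ.length = τ := by
        rw [List.concat_eq_append, List.eraseIdx_append_of_length_le (le_refl _)]
        simp
      rw [he1, hprod]
    · obtain ⟨j, k, hjk, hk, hprod⟩ := ih hτ
      refine ⟨j, k, hjk, by simp; omega, ?_⟩
      have he1 : (τ ++ [i]).eraseIdx k = τ.eraseIdx k ++ [i] :=
        List.eraseIdx_append_of_lt_length hk _
      have hjlen : j < (τ.eraseIdx k).length := by
        have h5 := List.length_eraseIdx_add_one hk
        omega
      have he2 : (τ.eraseIdx k ++ [i]).eraseIdx j = (τ.eraseIdx k).eraseIdx j ++ [i] :=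
        List.eraseIdx_append_of_lt_length hjlen _
      rw [he1, he2, cs.wordProd_append, cs.wordProd_append, hprod]

theorem wordProd_mem_closure {J : Set B} {ω : List B} (h : ∀ b ∈ ω, b ∈ J) :
    cs.wordProd ω ∈ Subgroup.closure (cs.simple '' J) := by
  induction ω with
  | nil => rw [cs.wordProd_nil]; exact Subgroup.one_mem _
  | cons i ω ih =>
    rw [cs.wordProd_cons]
    exact Subgroup.mul_mem _ (Subgroup.subset_closure ⟨i, h i (by simp), rfl⟩)
      (ih fun b hb => h b (by simp [hb]))

theorem exists_J_word {J : Set B} {w : W} (hw : w ∈ Subgroup.closure (cs.simple '' J)) :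
    ∃ ω : List B, (∀ b ∈ ω, b ∈ J) ∧ cs.wordProd ω = w := by
  induction hw using Subgroup.closure_induction with
  | mem x hx =>
    obtain ⟨j, hj, rfl⟩ := hx
    exact ⟨[j], by simpa using hj, by simp [cs.wordProd_cons, cs.wordProd_nil]⟩
  | one => exact ⟨[], by simp, cs.wordProd_nil⟩
  | mul x y hx hy ihx ihy =>
    obtain ⟨ω₁, h1, hp1⟩ := ihx
    obtain ⟨ω₂, h2, hp2⟩ := ihy
    refine ⟨ω₁ ++ ω₂, ?_, by rw [cs.wordProd_append, hp1, hp2]⟩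
    intro b hb
    rcases List.mem_append.mp hb with h | h
    · exact h1 b h
    · exact h2 b h
  | inv x hx ihx =>
    obtain ⟨ω, h1, hp⟩ := ihx
    exact ⟨ω.reverse, fun b hb => h1 b (List.mem_reverse.mp hb),
      by rw [cs.wordProd_reverse, hp]⟩

theorem exists_reduced_J_word_aux (J : Set B) : ∀ (n : ℕ) (ω : List B), ω.length = n →
    (∀ b ∈ ω, b ∈ J) → ∃ τ : List B, (∀ b ∈ τ, b ∈ J) ∧ cs.IsReduced τ ∧
      cs.wordProd τ = cs.wordProd ω := by
  intro n
  induction n using Nat.strong_induction_on with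
  | _ n ih =>
    intro ω hlen hJ
    by_cases hred : cs.IsReduced ω
    · exact ⟨ω, hJ, hred, rfl⟩
    · obtain ⟨j, k, hjk, hk, hprod⟩ := deletion cs hred
      have hsub : ∀ b ∈ (ω.eraseIdx k).eraseIdx j, b ∈ J := fun b hb =>
        hJ b ((List.eraseIdx_sublist ω k).subset
          ((List.eraseIdx_sublist (ω.eraseIdx k) j).subset hb))
      have hlen1 := List.length_eraseIdx_add_one hk
      have hjlt : j < (ω.eraseIdx k).length := by omega
      have hlen2 := List.length_eraseIdx_add_one hjlt
      obtain ⟨τ, h1, h2, h3⟩ := ih ((ω.eraseIdx k).eraseIdx j).length (by omega)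
        ((ω.eraseIdx k).eraseIdx j) rfl hsub
      exact ⟨τ, h1, h2, by rw [h3, hprod]⟩

theorem length_mul_of_min {J : Set B} {x : W}
    (hx : ∀ u ∈ Subgroup.closure (cs.simple '' J), cs.length x ≤ cs.length (x * u))
    {u : W} (hu : u ∈ Subgroup.closure (cs.simple '' J)) :
    cs.length (x * u) = cs.length x + cs.length u := by
  refine le_antisymm (cs.length_mul_le x u) ?_
  by_contra hlt
  push_neg at hlt
  obtain ⟨a, halen, haprod⟩ := cs.exists_reduced_word x
  replace halen : a.length = cs.length x := by
    rw [haprod]; exact (halen : cs.length (cs.wordProd a) = a.length).symm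
  obtain ⟨ω₀, hω₀J, hω₀⟩ := exists_J_word cs hu
  obtain ⟨b, hbJ, hbred, hbprod⟩ :=
    exists_reduced_J_word_aux cs J ω₀.length ω₀ rfl hω₀J
  rw [hω₀] at hbprod
  have hared : cs.IsReduced a := by
    rw [CoxeterSystem.IsReduced, ← haprod, halen]
  have hbu : cs.length u = b.length := by rw [← hbprod]; exact hbred
  have hwhole : cs.wordProd (a ++ b) = x * u := by
    rw [cs.wordProd_append, ← haprod, hbprod]
  have hnred : ¬ cs.IsReduced (a ++ b) := by
    intro hred
    rw [CoxeterSystem.IsReduced, hwhole, List.length_append] at hred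
    omega
  obtain ⟨j, k, hjk, hk, hprod⟩ := deletion cs hnred
  rw [hwhole] at hprod
  rw [List.length_append] at hk
  by_cases hkp : k < a.length
  · -- both deleted letters in a
    rw [List.eraseIdx_append_of_lt_length hkp,
      List.eraseIdx_append_of_lt_length (by have := List.length_eraseIdx_add_one hkp; omega),
      cs.wordProd_append] at hprod
    have hxa : cs.wordProd ((a.eraseIdx k).eraseIdx j) = x := by
      have : cs.wordProd ((a.eraseIdx k).eraseIdx j) * cs.wordProd b = x * cs.wordProd b := by
        rw [hprod, hbprod]
      exact mul_right_cancel this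
    have hle := cs.length_wordProd_le ((a.eraseIdx k).eraseIdx j)
    rw [hxa] at hle
    have h1 := List.length_eraseIdx_add_one hkp
    have hjlt : j < (a.eraseIdx k).length := by omega
    have h2 := List.length_eraseIdx_add_one hjlt
    have hlb := cs.length_wordProd_le b
    omega
  · push_neg at hkp
    rw [List.eraseIdx_append_of_length_le hkp] at hprod
    by_cases hjp : j < a.length
    · -- one letter in a, one in b
      rw [List.eraseIdx_append_of_lt_length hjp, cs.wordProd_append] at hprod
      set u' := cs.wordProd (b.eraseIdx (k - a.length)) with hu'
      have hu'mem : u' ∈ Subgroup.closure (cs.simple '' J) :=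
        wordProd_mem_closure cs fun c hc =>
          hbJ c ((List.eraseIdx_sublist b (k - a.length)).subset hc)
      have hxa : cs.wordProd (a.eraseIdx j) = x * (u * u'⁻¹) := by
        rw [← mul_assoc, ← hprod, mul_assoc, mul_inv_cancel, mul_one]
      have hxmem : u * u'⁻¹ ∈ Subgroup.closure (cs.simple '' J) :=
        Subgroup.mul_mem _ hu (Subgroup.inv_mem _ hu'mem)
      have hle := cs.length_wordProd_le (a.eraseIdx j)
      rw [hxa] at hle
      have h1 := List.length_eraseIdx_add_one hjp
      have h2 := hx _ hxmem
      omega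
    · -- both letters in b
      push_neg at hjp
      rw [List.eraseIdx_append_of_length_le hjp, cs.wordProd_append] at hprod
      have hub : cs.wordProd ((b.eraseIdx (k - a.length)).eraseIdx (j - a.length)) = u := by
        have : cs.wordProd a * cs.wordProd ((b.eraseIdx (k - a.length)).eraseIdx (j - a.length))
            = cs.wordProd a * u := by rw [hprod, ← haprod]
        exact mul_left_cancel this
      have hle := cs.length_wordProd_le ((b.eraseIdx (k - a.length)).eraseIdx (j - a.length))
      rw [hub] at hle
      have hkb : k - a.length < b.length := by omega
      have h1 := List.length_eraseIdx_add_one hkb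
      have hjb : j - a.length < (b.eraseIdx (k - a.length)).length := by omega
      have h2 := List.length_eraseIdx_add_one hjb
      omega

theorem sigma_wordProd (σ : W ≃* W) (p : B ≃ B)
    (hp : ∀ i, σ (cs.simple i) = cs.simple (p i)) (ω : List B) :
    σ (cs.wordProd ω) = cs.wordProd (ω.map p) := by
  induction ω with
  | nil => simp [cs.wordProd_nil]
  | cons i ω ih => rw [cs.wordProd_cons, map_mul, hp, ih, List.map_cons, cs.wordProd_cons]

theorem sigma_length (σ : W ≃* W) (p : B ≃ B)
    (hp : ∀ i, σ (cs.simple i) = cs.simple (p i)) (w : W) :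
    cs.length (σ w) = cs.length w := by
  have key : ∀ (σ' : W ≃* W) (p' : B ≃ B), (∀ i, σ' (cs.simple i) = cs.simple (p' i)) →
      ∀ v : W, cs.length (σ' v) ≤ cs.length v := by
    intro σ' p' hp' v
    obtain ⟨ω, hlen, hprod⟩ := cs.exists_reduced_word v
    rw [hprod, sigma_wordProd cs σ' p' hp']
    calc cs.length (cs.wordProd (ω.map p')) ≤ (ω.map p').length := cs.length_wordProd_le _
      _ = ω.length := List.length_map _
      _ = cs.length (cs.wordProd ω) := (hlen : cs.length (cs.wordProd ω) = ω.length).symm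
  have hp2 : ∀ i, σ.symm (cs.simple i) = cs.simple (p.symm i) := by
    intro i
    apply σ.injective
    rw [MulEquiv.apply_symm_apply, hp, Equiv.apply_symm_apply]
  refine le_antisymm (key σ p hp w) ?_
  have := key σ.symm p.symm hp2 (σ w)
  rwa [MulEquiv.symm_apply_apply] at this

theorem sigma_mem_closure (σ : W ≃* W) (p : B ≃ B)
    (hp : ∀ i, σ (cs.simple i) = cs.simple (p i)) {J : Set B} (hJ : p '' J = J)
    {u : W} (hu : u ∈ Subgroup.closure (cs.simple '' J)) :
    σ u ∈ Subgroup.closure (cs.simple '' J) := by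
  induction hu using Subgroup.closure_induction with
  | mem x hx =>
    obtain ⟨j, hj, rfl⟩ := hx
    rw [hp]
    exact Subgroup.subset_closure ⟨p j, by rw [← hJ]; exact ⟨j, hj, rfl⟩, rfl⟩
  | one => rw [map_one]; exact Subgroup.one_mem _
  | mul x y hx hy ihx ihy => rw [map_mul]; exact Subgroup.mul_mem _ ihx ihy
  | inv x hx ihx => rw [map_inv]; exact Subgroup.inv_mem _ ihx

theorem key_ineq (σ : W ≃* W) (p : B ≃ B)
    (hp : ∀ i, σ (cs.simple i) = cs.simple (p i)) (J : Set B)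
    {w : W} (hw : w ∈ Subgroup.closure (cs.simple '' J))
    {x : W} (hx : ∀ u ∈ Subgroup.closure (cs.simple '' J),
      cs.length x ≤ cs.length (x * u)) :
    cs.length w ≤ cs.length (x * w * (σ x)⁻¹) := by
  have h1 : cs.length (x * w) = cs.length x + cs.length w := length_mul_of_min cs hx hw
  have h2 : cs.length (σ x) = cs.length x := sigma_length cs σ p hp x
  have h3 : cs.length (x * w) ≤ cs.length (x * w * (σ x)⁻¹) + cs.length (σ x) := by
    have h4 := cs.length_mul_le (x * w * (σ x)⁻¹) (σ x)
    rwa [inv_mul_cancel_right] at h4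
  omega

end TwistAux

open TwistAux in
/-- Lemma 7.2: for `w ∈ W_J` and `x ∈ W^J`, `ℓ(x w σ(x)⁻¹) ≥ ℓ(w)` where `σ` is an
automorphism of `W` with `σ(I) = I` and `σ(J) = J`. In particular, if `w` has minimal
length in its `σ|_J`-twisted conjugacy class in `W_J`, then `w` has minimal length in its
`σ`-twisted conjugacy class in `W`. -/
theorem length_twisted_conj_ge_of_min_rep
    {B W : Type*} [Group W] {M : CoxeterMatrix B} (cs : CoxeterSystem M W)
    (σ : W ≃* W) (p : B ≃ B) (hp : ∀ i : B, σ (cs.simple i) = cs.simple (p i))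
    (J : Set B) (hJ : p '' J = J)
    (w : W) (hw : w ∈ Subgroup.closure (cs.simple '' J))
    (x : W) (hx : ∀ u ∈ Subgroup.closure (cs.simple '' J),
      cs.length x ≤ cs.length (x * u)) :
    cs.length w ≤ cs.length (x * w * (σ x)⁻¹) ∧
      ((∀ u ∈ Subgroup.closure (cs.simple '' J),
          cs.length w ≤ cs.length (u * w * (σ u)⁻¹)) →
        ∀ a : W, cs.length w ≤ cs.length (a * w * (σ a)⁻¹)) := by
  constructor
  · exact key_ineq cs σ p hp J hw hx
  · intro hmin a
    set P := Subgroup.closure (cs.simple '' J) with hP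
    have h0 : {n | ∃ u ∈ P, cs.length (a * u) = n}.Nonempty :=
      ⟨cs.length (a * 1), 1, Subgroup.one_mem _, rfl⟩
    obtain ⟨u₀, hu₀P, hu₀val⟩ := Nat.sInf_mem h0
    have hu₀ : ∀ v ∈ P, cs.length (a * u₀) ≤ cs.length (a * v) := by
      intro v hv
      rw [hu₀val]
      exact Nat.sInf_le ⟨v, hv, rfl⟩
    set x₀ := a * u₀ with hx₀def
    have hx₀ : ∀ v ∈ P, cs.length x₀ ≤ cs.length (x₀ * v) := by
      intro v hv
      have h5 : x₀ * v = a * (u₀ * v) := by rw [hx₀def, mul_assoc]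
      rw [h5]
      exact hu₀ (u₀ * v) (Subgroup.mul_mem _ hu₀P hv)
    have hw' : u₀⁻¹ * w * (σ u₀⁻¹)⁻¹ ∈ P :=
      Subgroup.mul_mem _ (Subgroup.mul_mem _ (Subgroup.inv_mem _ hu₀P) hw)
        (Subgroup.inv_mem _ (sigma_mem_closure cs σ p hp hJ (Subgroup.inv_mem _ hu₀P)))
    have heq : a * w * (σ a)⁻¹ = x₀ * (u₀⁻¹ * w * (σ u₀⁻¹)⁻¹) * (σ x₀)⁻¹ := by
      rw [hx₀def, map_mul, map_inv]
      simp only [map_mul, map_inv, mul_inv_rev, inv_inv]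
      group
    rw [heq]
    exact le_trans (hmin u₀⁻¹ (Subgroup.inv_mem _ hu₀P))
      (key_ineq cs σ p hp J hw' hx₀)
end
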